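/- arXiv:2303.02790 — 4 statements merged into one kernel-verified Lean document; each statement's English description precedes it below -/
import Mathlib

section
/- Let H be a complex inner product space, let n be a natural number, and let A_1,...,A_n and B_1,...,B_n be vectors in H. Let M be the n×n complex matrix with entries M_{ij} = ⟨A_i, B_j⟩. Then |det M| ≤ ∏_{i=1}^n ‖A_i‖ · ‖B_i‖. -/
open Module Matrix

local notation "⟪" x ", " y "⟫" => @inner ℂ _ _ x y

/-- Gram–Hadamard in a finite-dimensional space whose dimension equals the matrix size. -/
lemma gram_hadamard_fd {V : Type*} [NormedAddCommGroup V] [InnerProductSpace ℂ V]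
    [FiniteDimensional ℂ V] {n : ℕ} (h : Module.finrank ℂ V = n) (C D : Fin n → V) :
    ‖(Matrix.of fun i j => (⟪C i, D j⟫ : ℂ)).det‖ ≤ ∏ i : Fin n, ‖C i‖ * ‖D i‖ := by
  have hcard : Module.finrank ℂ V = Fintype.card (Fin n) := by simpa using h
  haveI : WellFoundedLT (Fin n) := inferInstance
  set e := InnerProductSpace.gramSchmidtOrthonormalBasis (𝕜 := ℂ) hcard D with he
  set f := InnerProductSpace.gramSchmidtOrthonormalBasis (𝕜 := ℂ) hcard C with hf
  set X : Matrix (Fin n) (Fin n) ℂ := Matrix.of fun i k => ⟪C i, e k⟫ with hX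
  set Y : Matrix (Fin n) (Fin n) ℂ := Matrix.of fun k j => ⟪e k, D j⟫ with hY
  set W : Matrix (Fin n) (Fin n) ℂ := Matrix.of fun k i => ⟪e k, C i⟫ with hW
  set Z : Matrix (Fin n) (Fin n) ℂ := Matrix.of fun k l => ⟪e k, f l⟫ with hZ
  set Y₂ : Matrix (Fin n) (Fin n) ℂ := Matrix.of fun l i => ⟪f l, C i⟫ with hY₂
  have hMXY : (Matrix.of fun i j => (⟪C i, D j⟫ : ℂ)) = X * Y := by
    ext i j
    simp only [Matrix.mul_apply, hX, hY, Matrix.of_apply]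
    exact (e.sum_inner_mul_inner (C i) (D j)).symm
  have hWZY : W = Z * Y₂ := by
    ext k i
    simp only [Matrix.mul_apply, hZ, hY₂, hW, Matrix.of_apply]
    exact (f.sum_inner_mul_inner (e k) (C i)).symm
  have hXW : X = W.conjTranspose := by
    ext i k
    simp only [hX, hW, Matrix.conjTranspose_apply, Matrix.of_apply]
    exact (inner_conj_symm (C i) (e k)).symm
  -- determinant of Z has norm 1
  have hZdet : ‖Z.det‖ = 1 := by
    have hZeq : Z = e.toBasis.toMatrix ⇑f := by
      ext k l
      rw [Basis.toMatrix_apply, OrthonormalBasis.coe_toBasis_repr_apply,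
        OrthonormalBasis.repr_apply_apply]
      rfl
    have := e.det_to_matrix_orthonormalBasis f
    rwa [Basis.det_apply, ← hZeq] at this
  -- Y is upper triangular
  have hYtri : Y.BlockTriangular id := by
    intro k j hjk
    exact InnerProductSpace.gramSchmidtOrthonormalBasis_inv_triangular (𝕜 := ℂ) hcard D hjk
  have hY₂tri : Y₂.BlockTriangular id := by
    intro l i hil
    exact InnerProductSpace.gramSchmidtOrthonormalBasis_inv_triangular (𝕜 := ℂ) hcard C hil
  have hYdet : ‖Y.det‖ ≤ ∏ i : Fin n, ‖D i‖ := by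
    rw [Matrix.det_of_upperTriangular hYtri, norm_prod]
    refine Finset.prod_le_prod (fun i _ => norm_nonneg _) (fun i _ => ?_)
    calc ‖(Y i i : ℂ)‖ ≤ ‖e i‖ * ‖D i‖ := norm_inner_le_norm _ _
      _ = ‖D i‖ := by rw [e.orthonormal.1 i, one_mul]
  have hY₂det : ‖Y₂.det‖ ≤ ∏ i : Fin n, ‖C i‖ := by
    rw [Matrix.det_of_upperTriangular hY₂tri, norm_prod]
    refine Finset.prod_le_prod (fun i _ => norm_nonneg _) (fun i _ => ?_)
    calc ‖(Y₂ i i : ℂ)‖ ≤ ‖f i‖ * ‖C i‖ := norm_inner_le_norm _ _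
      _ = ‖C i‖ := by rw [f.orthonormal.1 i, one_mul]
  have hXdet : ‖X.det‖ ≤ ∏ i : Fin n, ‖C i‖ := by
    rw [hXW, Matrix.det_conjTranspose, norm_star, hWZY, Matrix.det_mul, norm_mul, hZdet, one_mul]
    exact hY₂det
  calc ‖(Matrix.of fun i j => (⟪C i, D j⟫ : ℂ)).det‖ = ‖X.det‖ * ‖Y.det‖ := by
        rw [hMXY, Matrix.det_mul, norm_mul]
    _ ≤ (∏ i : Fin n, ‖C i‖) * ∏ i : Fin n, ‖D i‖ := by
        refine mul_le_mul hXdet hYdet (norm_nonneg _)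
          (Finset.prod_nonneg fun i _ => norm_nonneg _)
    _ = ∏ i : Fin n, ‖C i‖ * ‖D i‖ := (Finset.prod_mul_distrib).symm

/-- **Gram–Hadamard inequality.** For a square matrix whose entries are inner products
`M i j = ⟪A i, B j⟫` of vectors in a complex inner product space, the determinant is bounded
by the product of the norms of the vectors. -/
theorem gram_hadamard_inequality {H : Type*} [NormedAddCommGroup H] [InnerProductSpace ℂ H]
    (n : ℕ) (A B : Fin n → H) (M : Matrix (Fin n) (Fin n) ℂ)
    (hM : ∀ i j, M i j = (inner ℂ (A i) (B j) : ℂ)) :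
    ‖M.det‖ ≤ ∏ i : Fin n, ‖A i‖ * ‖B i‖ := by
  by_cases hB : LinearIndependent ℂ B
  · set V := Submodule.span ℂ (Set.range B) with hV
    haveI : FiniteDimensional ℂ V := FiniteDimensional.span_of_finite ℂ (Set.finite_range B)
    have hVrank : Module.finrank ℂ V = n := by
      rw [hV, finrank_span_eq_card hB, Fintype.card_fin]
    set D : Fin n → V := fun j => ⟨B j, Submodule.subset_span ⟨j, rfl⟩⟩ with hD
    set C : Fin n → V := fun i => Submodule.orthogonalProjectionOnto V (A i) with hC
    have hMeq : M = Matrix.of fun i j => (⟪C i, D j⟫ : ℂ) := by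
      ext i j
      rw [hM, Matrix.of_apply]
      have hsub : A i - (C i : H) ∈ Vᗮ := Submodule.sub_starProjection_mem_orthogonal (K := V) (A i)
      have hzero : (⟪A i - (C i : H), B j⟫ : ℂ) = 0 :=
        Submodule.inner_left_of_mem_orthogonal (show B j ∈ V from Submodule.subset_span ⟨j, rfl⟩) hsub
      have : (⟪A i, B j⟫ : ℂ) = ⟪(C i : H), B j⟫ := by
        have := inner_sub_left (𝕜 := ℂ) (A i) ((C i : H)) (B j)
        rw [hzero] at this
        linear_combination -this
      rw [this]
      rfl
    rw [hMeq]
    refine le_trans (gram_hadamard_fd hVrank C D) ?_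
    refine Finset.prod_le_prod (fun i _ => mul_nonneg (norm_nonneg _) (norm_nonneg _))
      (fun i _ => ?_)
    have hCle : ‖C i‖ ≤ ‖A i‖ := by
      calc ‖C i‖ ≤ ‖Submodule.orthogonalProjectionOnto V‖ * ‖A i‖ :=
            (Submodule.orthogonalProjectionOnto V).le_opNorm (A i)
        _ ≤ 1 * ‖A i‖ := by
            exact mul_le_mul_of_nonneg_right (Submodule.orthogonalProjectionOnto_norm_le V) (norm_nonneg _)
        _ = ‖A i‖ := one_mul _
    have hDeq : ‖D i‖ = ‖B i‖ := rfl
    rw [hDeq]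
    exact mul_le_mul_of_nonneg_right hCle (norm_nonneg _)
  · obtain ⟨g, hgsum, i₀, hgi₀⟩ := Fintype.not_linearIndependent_iff.mp hB
    have hdet : M.det = 0 := by
      rw [← Matrix.exists_mulVec_eq_zero_iff]
      refine ⟨g, fun hg0 => hgi₀ (by rw [hg0]; rfl), ?_⟩
      ext i
      calc (M *ᵥ g) i = ∑ j, M i j * g j := rfl
        _ = ∑ j, (⟪A i, g j • B j⟫ : ℂ) := by
            refine Finset.sum_congr rfl fun j _ => ?_
            rw [hM, inner_smul_right, mul_comm]
        _ = ⟪A i, ∑ j, g j • B j⟫ := (inner_sum _ _ _).symm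
        _ = 0 := by rw [hgsum, inner_zero_right]
    rw [hdet, norm_zero]
    exact Finset.prod_nonneg fun i _ => mul_nonneg (norm_nonneg _) (norm_nonneg _)
end

section
/- Let Λ be a nonempty finite set, n ≥ 2 a natural number, g : Λ × Λ → ℝ a symmetric function with nonnegative values, and let T be a tree (a connected acyclic simple graph) on the vertex set {1,...,n}. Then for every fixed x_1 ∈ Λ, the sum over all (x_2,...,x_n) ∈ Λ^{n-1} of the product over the edges {i,j} of T of g(x_i,x_j) is at most G^{n-1}, where G = max_{x∈Λ} Σ_{y∈Λ} g(x,y). -/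
open Finset

open scoped Classical in
lemma core_sum {Λ : Type*} [Fintype Λ] [Nonempty Λ] {V : Type*} [Fintype V] [DecidableEq V]
    (g : Λ × Λ → ℝ) (hsym : ∀ x y, g (x, y) = g (y, x)) (hpos : ∀ x y, 0 ≤ g (x, y))
    (p : V → V) (ρ : V → ℕ)
    (S : Finset V) (hS : ∀ i ∈ S, ρ (p i) < ρ i) (x : V → Λ) :
    ∑ y ∈ univ.filter (fun y : V → Λ => ∀ j ∉ S, y j = x j), ∏ i ∈ S, g (y i, y (p i))
      ≤ (univ.sup' univ_nonempty fun a : Λ => ∑ b : Λ, g (a, b)) ^ S.card := by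
  set G : ℝ := univ.sup' univ_nonempty fun a : Λ => ∑ b : Λ, g (a, b) with hG
  have hGnn : 0 ≤ G := by
    obtain ⟨a⟩ := (inferInstance : Nonempty Λ)
    refine le_trans (Finset.sum_nonneg (s := (univ : Finset Λ)) (f := fun b => g (a, b))
      fun b _ => hpos a b) ?_
    exact Finset.le_sup' (fun a : Λ => ∑ b : Λ, g (a, b)) (mem_univ a)
  have hrow : ∀ b : Λ, ∑ a : Λ, g (a, b) ≤ G := by
    intro b
    have : ∑ a : Λ, g (a, b) = ∑ a : Λ, g (b, a) := by simp [hsym]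
    rw [this]
    exact Finset.le_sup' (fun a : Λ => ∑ b : Λ, g (a, b)) (mem_univ b)
  clear_value G
  clear hG
  induction S using Finset.strongInduction with
  | _ S ih =>
    rcases S.eq_empty_or_nonempty with rfl | hne
    · have hx : (univ.filter (fun y : V → Λ => ∀ j ∉ (∅ : Finset V), y j = x j)) = {x} := by
        ext y; simp [funext_iff]
      rw [hx]; simp
    · obtain ⟨v, hvS, hvmax⟩ := Finset.exists_max_image S ρ hne
      have hpv : p v ≠ v := fun h => absurd (hS v hvS) (by rw [h]; exact lt_irrefl _)
      have hpnev : ∀ i ∈ S, p i ≠ v := by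
        intro i hi h
        exact absurd (h ▸ hS i hi) (not_lt.mpr (hvmax i hi))
      set S' := S.erase v with hS'
      have hSS' : S' ⊂ S := Finset.erase_ssubset hvS
      have key : ∑ y ∈ univ.filter (fun y : V → Λ => ∀ j ∉ S, y j = x j),
            ∏ i ∈ S, g (y i, y (p i))
          = ∑ z ∈ ((univ : Finset Λ) ×ˢ univ.filter (fun y : V → Λ => ∀ j ∉ S', y j = x j)),
            g (z.1, z.2 (p v)) * ∏ i ∈ S', g (z.2 i, z.2 (p i)) := by
        refine Finset.sum_bij' (fun y _ => (y v, Function.update y v (x v)))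
          (fun z _ => Function.update z.2 v z.1) ?_ ?_ ?_ ?_ ?_
        · intro y hy
          simp only [mem_filter, mem_univ, true_and] at hy
          rw [Finset.mem_product]
          refine ⟨mem_univ _, ?_⟩
          simp only [mem_filter, mem_univ, true_and]
          intro j hj
          by_cases hjv : j = v
          · subst hjv; simp
          · rw [Function.update_of_ne hjv]
            exact hy j (fun hjS => hj (Finset.mem_erase.mpr ⟨hjv, hjS⟩))
        · intro z hz
          rw [Finset.mem_product] at hz
          obtain ⟨-, hz2⟩ := hz
          simp only [mem_filter, mem_univ, true_and] at hz2 ⊢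
          intro j hj
          have hjv : j ≠ v := fun h => hj (h ▸ hvS)
          rw [Function.update_of_ne hjv]
          exact hz2 j (fun h => hj (Finset.mem_of_mem_erase h))
        · intro y hy
          funext j
          by_cases hjv : j = v
          · subst hjv; simp
          · simp [Function.update_of_ne hjv]
        · intro z hz
          rw [Finset.mem_product] at hz
          obtain ⟨-, hz2⟩ := hz
          simp only [mem_filter, mem_univ, true_and] at hz2
          have h2 : z.2 v = x v := hz2 v (Finset.notMem_erase v S)
          have : Function.update (Function.update z.2 v z.1) v (x v) = z.2 := by
            funext j
            by_cases hjv : j = v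
            · subst hjv; simp [h2]
            · simp [Function.update_of_ne hjv]
          simp [this]
        · intro y hy
          have hsplit : ∏ i ∈ S, g (y i, y (p i))
              = g (y v, y (p v)) * ∏ i ∈ S', g (y i, y (p i)) := by
            rw [hS', ← Finset.prod_erase_mul S _ hvS]; ring
          show ∏ i ∈ S, g (y i, y (p i))
              = g (y v, Function.update y v (x v) (p v))
                * ∏ i ∈ S', g (Function.update y v (x v) i, Function.update y v (x v) (p i))
          rw [Function.update_of_ne hpv, hsplit]
          congr 1
          refine Finset.prod_congr rfl fun i hi => ?_
          have hiv : i ≠ v := (Finset.mem_erase.mp hi).1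
          have hpiv : p i ≠ v := hpnev i (Finset.mem_of_mem_erase hi)
          rw [Function.update_of_ne hiv, Function.update_of_ne hpiv]
      rw [key, Finset.sum_product_right]
      have hP : ∀ y : V → Λ, 0 ≤ ∏ i ∈ S', g (y i, y (p i)) :=
        fun y => Finset.prod_nonneg fun i _ => hpos _ _
      have hstep : ∀ y : V → Λ, ∑ a : Λ, g (a, y (p v)) * ∏ i ∈ S', g (y i, y (p i))
          ≤ G * ∏ i ∈ S', g (y i, y (p i)) := by
        intro y
        rw [← Finset.sum_mul]
        exact mul_le_mul_of_nonneg_right (hrow _) (hP y)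
      calc ∑ y ∈ univ.filter (fun y : V → Λ => ∀ j ∉ S', y j = x j),
            ∑ a : Λ, g (a, y (p v)) * ∏ i ∈ S', g (y i, y (p i))
          ≤ ∑ y ∈ univ.filter (fun y : V → Λ => ∀ j ∉ S', y j = x j),
            G * ∏ i ∈ S', g (y i, y (p i)) := Finset.sum_le_sum fun y _ => hstep y
        _ = G * ∑ y ∈ univ.filter (fun y : V → Λ => ∀ j ∉ S', y j = x j),
            ∏ i ∈ S', g (y i, y (p i)) := by rw [Finset.mul_sum]
        _ ≤ G * G ^ S'.card := by
            refine mul_le_mul_of_nonneg_left ?_ hGnn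
            exact ih S' hSS' (fun i hi => hS i (Finset.mem_of_mem_erase hi))
        _ = G ^ S.card := by
            rw [← pow_succ']
            congr 1
            rw [hS', Finset.card_erase_of_mem hvS]
            have h1 : 1 ≤ S.card := Finset.card_pos.mpr ⟨v, hvS⟩
            omega

lemma exists_parent {V : Type*} {T : SimpleGraph V} (hc : T.Connected) (r : V) :
    ∀ i, i ≠ r → ∃ w, T.Adj i w ∧ T.dist w r < T.dist i r := by
  intro i hi
  obtain ⟨q, hq⟩ := (hc i r).exists_walk_length_eq_dist
  have hd : 0 < T.dist i r := hc.pos_dist_of_ne hi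
  cases q with
  | nil => simp at hq; exact absurd rfl hi
  | cons h q' =>
    refine ⟨_, h, ?_⟩
    have := SimpleGraph.dist_le q'
    simp [SimpleGraph.Walk.length_cons] at hq
    omega

open scoped Classical in
/-- **Tree-graph summation bound.** For a nonempty finite set `Λ`, a symmetric nonnegative
kernel `g`, and a tree `T` on `{1,…,n}` (here `Fin n`, with vertex `1` corresponding to `0`),
the sum over the positions of all vertices other than the fixed root `x₁` of the product of the
kernel over the edges of `T` is at most `G^(n-1)`, where `G` is the maximal row sum of `g`. -/
theorem tree_graph_sum_bound {Λ : Type*} [Fintype Λ] [Nonempty Λ]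
    (n : ℕ) (hn : 2 ≤ n) (g : Λ × Λ → ℝ)
    (hsym : ∀ x y, g (x, y) = g (y, x)) (hpos : ∀ x y, 0 ≤ g (x, y))
    (T : SimpleGraph (Fin n)) (hT : T.IsTree) (x₁ : Λ) :
    ∑ x ∈ Finset.univ.filter (fun x : Fin n → Λ => x ⟨0, by omega⟩ = x₁),
      ∏ e ∈ T.edgeFinset,
        Sym2.lift ⟨fun i j => g (x i, x j), fun i j => by simp [hsym]⟩ e
      ≤ (Finset.univ.sup' Finset.univ_nonempty fun x : Λ => ∑ y : Λ, g (x, y)) ^ (n - 1) := by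
  set r : Fin n := ⟨0, by omega⟩ with hr
  have hc := hT.isConnected
  choose! p hpadj hpdist using exists_parent hc r
  set ρ : Fin n → ℕ := fun i => T.dist i r with hρ
  set S : Finset (Fin n) := Finset.univ.erase r with hSdef
  have hS : ∀ i ∈ S, ρ (p i) < ρ i := fun i hi => hpdist i (Finset.mem_erase.mp hi).1
  have hinj : Set.InjOn (fun i => s(i, p i)) S := by
    intro i hi j hj hij
    simp only [Sym2.eq_iff] at hij
    rcases hij with ⟨h1, _⟩ | ⟨h1, h2⟩
    · exact h1
    · exfalso
      have hi' := hS i hi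
      have hj' := hS j hj
      rw [h2] at hi'
      rw [← h1] at hj'
      omega
  have himg : S.image (fun i => s(i, p i)) = T.edgeFinset := by
    refine Finset.eq_of_subset_of_card_le ?_ ?_
    · intro e he
      simp only [Finset.mem_image] at he
      obtain ⟨i, hi, rfl⟩ := he
      rw [SimpleGraph.mem_edgeFinset]
      exact (hpadj i (Finset.mem_erase.mp hi).1)
    · rw [Finset.card_image_of_injOn hinj]
      have h1 := hT.card_edgeFinset
      have h2 : S.card = n - 1 := by
        rw [hSdef, Finset.card_erase_of_mem (mem_univ r), Finset.card_univ, Fintype.card_fin]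
      rw [h2]
      rw [Fintype.card_fin] at h1
      omega
  have hprod : ∀ x : Fin n → Λ,
      ∏ e ∈ T.edgeFinset,
        Sym2.lift ⟨fun i j => g (x i, x j), fun i j => by simp [hsym]⟩ e
      = ∏ i ∈ S, g (x i, x (p i)) := by
    intro x
    rw [← himg, Finset.prod_image hinj]
    simp
  have hcard : S.card = n - 1 := by
    rw [hSdef, Finset.card_erase_of_mem (mem_univ r), Finset.card_univ, Fintype.card_fin]
  have H := core_sum g hsym hpos p ρ S hS (fun _ => x₁)
  rw [← hcard]
  refine le_trans (le_of_eq ?_) H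
  refine Finset.sum_congr ?_ (fun y _ => hprod y)
  ext y
  simp only [Finset.mem_filter, Finset.mem_univ, true_and]
  constructor
  · intro h j hj
    have hjr : j = r := by
      by_contra hne
      exact hj (Finset.mem_erase.mpr ⟨hne, Finset.mem_univ j⟩)
    rw [hjr]; exact h
  · intro h
    exact h r (by simp [hSdef])
end

section
/- Let n ≥ 1 and let g be a real symmetric positive semidefinite n×n matrix. For each nonempty subset Y ⊆ {1,...,n} set V(Y) = Σ_{j∈Y} Σ_{j'∈Y} g_{jj'}, and define the Ursell functions φ(Y) for nonempty Y ⊆ {1,...,n} recursively by φ({j}) = e^{-V({j})} and, for |Y| ≥ 2, by the requirement that e^{-V(Y)} = Σ_π ∏_{B∈π} φ(B), where the sum runs over all partitions π of Y into nonempty blocks. Then |φ({1,...,n})| ≤ Σ_T ∏_{{j,j'}∈E(T)} 2|g_{jj'}|, where the sum runs over all trees T on the vertex set {1,...,n} and the product runs over the edges of T. -/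
/-- `P` is a partition of the finite set `Y` into nonempty blocks. -/
def IsPartitionOf {n : ℕ} (P : Finset (Finset (Fin n))) (Y : Finset (Fin n)) : Prop :=
  (∀ B ∈ P, B.Nonempty) ∧
  ((P : Set (Finset (Fin n))).PairwiseDisjoint id) ∧
  P.sup id = Y



open Finset

namespace BBF

open scoped Classical

variable {n : ℕ} (g : Matrix (Fin n) (Fin n) ℝ)

/-- symmetrized coupling on unordered pairs: `vv s(x,y) = g x y + g y x`. -/
noncomputable def vv : Sym2 (Fin n) → ℝ :=
  Sym2.lift ⟨fun x y => g x y + g y x, by intro x y; dsimp; ring⟩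

@[simp] lemma vv_mk (x y : Fin n) : vv g s(x, y) = g x y + g y x := rfl

noncomputable def zeta (e : Sym2 (Fin n)) : ℝ := Real.exp (-(vv g e)) - 1

/-- nondiagonal pairs with both members in `Y`. -/
def pairsIn (Y : Finset (Fin n)) : Finset (Sym2 (Fin n)) :=
  univ.filter fun e => ¬ e.IsDiag ∧ ∀ x ∈ e, x ∈ Y

lemma mem_pairsIn {Y : Finset (Fin n)} {e : Sym2 (Fin n)} :
    e ∈ pairsIn Y ↔ ¬ e.IsDiag ∧ ∀ x ∈ e, x ∈ Y := by
  simp [pairsIn]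

lemma mk_mem_pairsIn {Y : Finset (Fin n)} {x y : Fin n} :
    s(x, y) ∈ pairsIn Y ↔ x ≠ y ∧ x ∈ Y ∧ y ∈ Y := by
  simp only [mem_pairsIn, Sym2.mem_iff, Sym2.isDiag_iff_proj_eq]
  constructor
  · rintro ⟨h1, h2⟩
    exact ⟨h1, h2 x (Or.inl rfl), h2 y (Or.inr rfl)⟩
  · rintro ⟨h1, h2, h3⟩
    refine ⟨h1, ?_⟩
    rintro z hz
    rcases hz with rfl | rfl <;> assumption

lemma pairsIn_mono {Y Z : Finset (Fin n)} (h : Y ⊆ Z) : pairsIn Y ⊆ pairsIn Z := by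
  intro e he
  rw [mem_pairsIn] at he ⊢
  exact ⟨he.1, fun x hx => h (he.2 x hx)⟩

lemma pairsIn_disjoint {S S' : Finset (Fin n)} (h : Disjoint S S') :
    Disjoint (pairsIn S) (pairsIn S') := by
  rw [Finset.disjoint_left]
  intro e he he'
  induction e with
  | _ x y =>
    rw [mk_mem_pairsIn] at he he'
    exact (Finset.disjoint_left.1 h) he.2.1 he'.2.1

@[simp] lemma pairsIn_empty : pairsIn (∅ : Finset (Fin n)) = ∅ := by
  ext e
  induction e with
  | _ x y => simp [mk_mem_pairsIn]

@[simp] lemma pairsIn_singleton (j : Fin n) : pairsIn ({j} : Finset (Fin n)) = ∅ := by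
  ext e
  induction e with
  | _ x y =>
    simp only [mk_mem_pairsIn, Finset.mem_singleton, Finset.notMem_empty, iff_false]
    rintro ⟨h, rfl, rfl⟩
    exact h rfl

/-- reachability through a set of edges. -/
def Reach (E : Finset (Sym2 (Fin n))) (x y : Fin n) : Prop :=
  Relation.ReflTransGen (fun u w => s(u, w) ∈ E) x y

lemma Reach.rfl' {E : Finset (Sym2 (Fin n))} {x : Fin n} : Reach E x x :=
  Relation.ReflTransGen.refl

lemma Reach.symm {E : Finset (Sym2 (Fin n))} {x y : Fin n} (h : Reach E x y) : Reach E y x := by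
  haveI : Std.Symm (fun u w : Fin n => s(u, w) ∈ E) :=
    ⟨fun u w huw => by rwa [Sym2.eq_swap] at huw⟩
  exact (Relation.ReflTransGen.symmetric (r := fun u w : Fin n => s(u, w) ∈ E)).symm x y h

lemma Reach.trans {E : Finset (Sym2 (Fin n))} {x y z : Fin n}
    (h : Reach E x y) (h' : Reach E y z) : Reach E x z :=
  Relation.ReflTransGen.trans h h'

lemma Reach.mono {E E' : Finset (Sym2 (Fin n))} (hE : E ⊆ E') {x y : Fin n}
    (h : Reach E x y) : Reach E' x y :=
  Relation.ReflTransGen.mono (fun u w hm => hE hm) x y h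

/-- connected graphs (edge sets) spanning `Y`. -/
noncomputable def conns (Y : Finset (Fin n)) : Finset (Finset (Sym2 (Fin n))) :=
  (pairsIn Y).powerset.filter fun E => ∀ x ∈ Y, ∀ y ∈ Y, Reach E x y

/-- connected-graph generating sum on `Y`. -/
noncomputable def cc (Y : Finset (Fin n)) : ℝ :=
  ∑ E ∈ conns Y, ∏ e ∈ E, zeta g e

noncomputable def allSum (Y : Finset (Fin n)) : ℝ :=
  ∑ E ∈ (pairsIn Y).powerset, ∏ e ∈ E, zeta g e

noncomputable def parts (Y : Finset (Fin n)) : Finset (Finset (Finset (Fin n))) :=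
  Finset.univ.filter fun P => IsPartitionOf P Y

noncomputable def partSum (F : Finset (Fin n) → ℝ) (Y : Finset (Fin n)) : ℝ :=
  ∑ P ∈ parts Y, ∏ B ∈ P, F B

end BBF
namespace BBF

open Finset
open scoped Classical

variable {n : ℕ} (g : Matrix (Fin n) (Fin n) ℝ)

section split

variable {Y S : Finset (Fin n)} {j0 : Fin n}

lemma edge_class {E : Finset (Sym2 (Fin n))} (hE : E ⊆ pairsIn Y)
    (hS : S = Y.filter fun x => Reach E j0 x) {e : Sym2 (Fin n)} (he : e ∈ E) :
    e ∈ pairsIn S ∨ e ∈ pairsIn (Y \ S) := by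
  induction e with
  | _ x y =>
    obtain ⟨hxy, hx, hy⟩ := mk_mem_pairsIn.1 (hE he)
    by_cases hxS : x ∈ S
    · left
      have hrx : Reach E j0 x := (Finset.mem_filter.1 (hS ▸ hxS)).2
      have hry : Reach E j0 y := hrx.tail he
      have hyS : y ∈ S := hS ▸ Finset.mem_filter.2 ⟨hy, hry⟩
      exact mk_mem_pairsIn.2 ⟨hxy, hxS, hyS⟩
    · right
      have hyS : y ∉ S := by
        intro hyS
        have hry : Reach E j0 y := (Finset.mem_filter.1 (hS ▸ hyS)).2
        have : Reach E j0 x := hry.tail (by rwa [Sym2.eq_swap])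
        exact hxS (hS ▸ Finset.mem_filter.2 ⟨hx, this⟩)
      exact mk_mem_pairsIn.2 ⟨hxy, Finset.mem_sdiff.2 ⟨hx, hxS⟩, Finset.mem_sdiff.2 ⟨hy, hyS⟩⟩

lemma reach_restrict {E : Finset (Sym2 (Fin n))} (hE : E ⊆ pairsIn Y)
    (hS : S = Y.filter fun x => Reach E j0 x) :
    ∀ x, Reach E j0 x → Reach (E.filter (· ∈ pairsIn S)) j0 x := by
  intro x hx
  induction hx with
  | refl => exact Reach.rfl'
  | tail hu step ih =>
    rename_i b c
    obtain ⟨hbc, hb, hc⟩ := mk_mem_pairsIn.1 (hE step)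
    have hbS : b ∈ S := hS ▸ Finset.mem_filter.2 ⟨hb, hu⟩
    have hcS : c ∈ S := hS ▸ Finset.mem_filter.2 ⟨hc, hu.tail step⟩
    exact ih.tail (Finset.mem_filter.2 ⟨step, mk_mem_pairsIn.2 ⟨hbc, hbS, hcS⟩⟩)

lemma comp_union (hSY : S ⊆ Y) (hj0S : j0 ∈ S) {E1 E2 : Finset (Sym2 (Fin n))}
    (hE1 : E1 ∈ conns S) (hE2 : E2 ⊆ pairsIn (Y \ S)) :
    (Y.filter fun x => Reach (E1 ∪ E2) j0 x) = S := by
  obtain ⟨hE1p, hE1c⟩ : E1 ⊆ pairsIn S ∧ _ := by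
    have := Finset.mem_filter.1 hE1
    exact ⟨Finset.mem_powerset.1 this.1, this.2⟩
  apply Finset.Subset.antisymm
  · intro x hx
    have key : ∀ z, Reach (E1 ∪ E2) j0 z → z ∈ S := by
      intro z hr
      induction hr with
      | refl => exact hj0S
      | tail hu step ih =>
        rcases Finset.mem_union.1 step with h | h
        · exact (mk_mem_pairsIn.1 (hE1p h)).2.2
        · exact absurd ih (Finset.mem_sdiff.1 (mk_mem_pairsIn.1 (hE2 h)).2.1).2
    exact key x (Finset.mem_filter.1 hx).2
  · intro x hxS
    refine Finset.mem_filter.2 ⟨hSY hxS, ?_⟩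
    exact (hE1c j0 hj0S x hxS).mono Finset.subset_union_left

end split

end BBF
namespace BBF

open Finset
open scoped Classical

variable {n : ℕ} (g : Matrix (Fin n) (Fin n) ℝ)

lemma allSum_split {Y : Finset (Fin n)} {j0 : Fin n} (hj0 : j0 ∈ Y) :
    allSum g Y
      = ∑ S ∈ Y.powerset.filter (fun S => j0 ∈ S), cc g S * allSum g (Y \ S) := by
  have hmaps : ∀ E ∈ (pairsIn Y).powerset,
      (Y.filter fun x => Reach E j0 x) ∈ Y.powerset.filter (fun S => j0 ∈ S) := by
    intro E _
    exact Finset.mem_filter.2 ⟨Finset.mem_powerset.2 (Finset.filter_subset _ _),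
      Finset.mem_filter.2 ⟨hj0, Reach.rfl'⟩⟩
  rw [allSum, ← Finset.sum_fiberwise_of_maps_to hmaps (fun E => ∏ e ∈ E, zeta g e)]
  refine Finset.sum_congr rfl ?_
  intro S hS
  obtain ⟨hSY, hj0S⟩ : S ⊆ Y ∧ j0 ∈ S := by
    have := Finset.mem_filter.1 hS
    exact ⟨Finset.mem_powerset.1 this.1, this.2⟩
  have key : (∑ E ∈ (pairsIn Y).powerset with (Y.filter fun x => Reach E j0 x) = S,
        ∏ e ∈ E, zeta g e)
      = ∑ p ∈ (conns S) ×ˢ (pairsIn (Y \ S)).powerset,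
          (∏ e ∈ p.1, zeta g e) * (∏ e ∈ p.2, zeta g e) := by
    refine Finset.sum_nbij'
      (fun E => (E.filter (· ∈ pairsIn S), E.filter (· ∈ pairsIn (Y \ S))))
      (fun p => p.1 ∪ p.2) ?_ ?_ ?_ ?_ ?_
    · intro E hE
      obtain ⟨hEp, hcomp⟩ : E ⊆ pairsIn Y ∧ (Y.filter fun x => Reach E j0 x) = S := by
        have := Finset.mem_filter.1 hE
        exact ⟨Finset.mem_powerset.1 this.1, this.2⟩
      refine Finset.mem_product.2 ⟨?_, ?_⟩
      · refine Finset.mem_filter.2 ⟨Finset.mem_powerset.2 ?_, ?_⟩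
        · intro e he
          exact (Finset.mem_filter.1 he).2
        · intro x hx y hy
          have hrx : Reach E j0 x := (Finset.mem_filter.1 (hcomp ▸ hx)).2
          have hry : Reach E j0 y := (Finset.mem_filter.1 (hcomp ▸ hy)).2
          have h1 := reach_restrict hEp hcomp.symm x hrx
          have h2 := reach_restrict hEp hcomp.symm y hry
          exact h1.symm.trans h2
      · refine Finset.mem_powerset.2 ?_
        intro e he
        exact (Finset.mem_filter.1 he).2
    · intro p hp
      obtain ⟨h1, h2⟩ := Finset.mem_product.1 hp
      have h2' : p.2 ⊆ pairsIn (Y \ S) := Finset.mem_powerset.1 h2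
      have h1' : p.1 ⊆ pairsIn S := by
        have := Finset.mem_filter.1 h1
        exact Finset.mem_powerset.1 this.1
      refine Finset.mem_filter.2 ⟨Finset.mem_powerset.2 ?_, comp_union hSY hj0S h1 h2'⟩
      intro e he
      rcases Finset.mem_union.1 he with h | h
      · exact pairsIn_mono hSY (h1' h)
      · exact pairsIn_mono (Finset.sdiff_subset) (h2' h)
    · intro E hE
      obtain ⟨hEp, hcomp⟩ : E ⊆ pairsIn Y ∧ (Y.filter fun x => Reach E j0 x) = S := by
        have := Finset.mem_filter.1 hE
        exact ⟨Finset.mem_powerset.1 this.1, this.2⟩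
      dsimp only
      rw [← Finset.filter_or]
      apply Finset.filter_true_of_mem
      intro e he
      exact edge_class hEp hcomp.symm he
    · intro p hp
      obtain ⟨h1, h2⟩ := Finset.mem_product.1 hp
      have h2' : p.2 ⊆ pairsIn (Y \ S) := Finset.mem_powerset.1 h2
      have h1' : p.1 ⊆ pairsIn S := by
        have := Finset.mem_filter.1 h1
        exact Finset.mem_powerset.1 this.1
      have hdisj : Disjoint (pairsIn S) (pairsIn (Y \ S)) :=
        pairsIn_disjoint Finset.disjoint_sdiff
      have e1 : (p.1 ∪ p.2).filter (· ∈ pairsIn S) = p.1 := by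
        rw [Finset.filter_union, Finset.filter_true_of_mem (fun e he => h1' he),
          Finset.filter_false_of_mem, Finset.union_empty]
        intro e he
        exact Finset.disjoint_right.1 hdisj (h2' he)
      have e2 : (p.1 ∪ p.2).filter (· ∈ pairsIn (Y \ S)) = p.2 := by
        rw [Finset.filter_union, Finset.filter_false_of_mem, Finset.filter_true_of_mem
          (fun e he => h2' he), Finset.empty_union]
        intro e he
        exact Finset.disjoint_left.1 hdisj (h1' he)
      exact Prod.ext e1 e2
    · intro E hE
      obtain ⟨hEp, hcomp⟩ : E ⊆ pairsIn Y ∧ (Y.filter fun x => Reach E j0 x) = S := by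
        have := Finset.mem_filter.1 hE
        exact ⟨Finset.mem_powerset.1 this.1, this.2⟩
      dsimp only
      have hdisj : Disjoint (E.filter (· ∈ pairsIn S)) (E.filter (· ∈ pairsIn (Y \ S))) :=
        Finset.disjoint_left.2 fun e h1 h2 =>
          Finset.disjoint_left.1 (pairsIn_disjoint Finset.disjoint_sdiff)
            (Finset.mem_filter.1 h1).2 (Finset.mem_filter.1 h2).2
      rw [← Finset.prod_union hdisj, ← Finset.filter_or,
        Finset.filter_true_of_mem (fun e he => edge_class hEp hcomp.symm he)]
  rw [key, Finset.sum_product, cc, allSum, Finset.sum_mul_sum]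

end BBF
namespace BBF

open Finset
open scoped Classical

variable {n : ℕ} (g : Matrix (Fin n) (Fin n) ℝ)

lemma mem_parts {P : Finset (Finset (Fin n))} {Y : Finset (Fin n)} :
    P ∈ parts Y ↔ IsPartitionOf P Y := by simp [parts]

lemma block_unique {P : Finset (Finset (Fin n))} {Y : Finset (Fin n)}
    (hP : IsPartitionOf P Y) {B B' : Finset (Fin n)} (hB : B ∈ P) (hB' : B' ∈ P)
    {j0 : Fin n} (hj : j0 ∈ B) (hj' : j0 ∈ B') : B = B' := by
  by_contra hne
  have := hP.2.1 (by exact_mod_cast hB) (by exact_mod_cast hB') hne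
  exact Finset.disjoint_left.1 this hj hj'

/-- the block of a partition containing `j0`. -/
def bl (j0 : Fin n) (P : Finset (Finset (Fin n))) : Finset (Fin n) :=
  P.sup fun B => if j0 ∈ B then B else ∅

lemma bl_eq {P : Finset (Finset (Fin n))} {Y : Finset (Fin n)} (hP : IsPartitionOf P Y)
    {B : Finset (Fin n)} (hB : B ∈ P) {j0 : Fin n} (hj : j0 ∈ B) : bl j0 P = B := by
  apply le_antisymm
  · apply Finset.sup_le
    intro C hC
    by_cases hjC : j0 ∈ C
    · rw [if_pos hjC, block_unique hP hC hB hjC hj]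
    · rw [if_neg hjC]
      exact Finset.empty_subset _
  · have := Finset.le_sup (f := fun B => if j0 ∈ B then B else ∅) hB
    simp only [if_pos hj] at this
    exact this

lemma exists_block {P : Finset (Finset (Fin n))} {Y : Finset (Fin n)}
    (hP : IsPartitionOf P Y) {j0 : Fin n} (hj0 : j0 ∈ Y) : ∃ B ∈ P, j0 ∈ B := by
  have : j0 ∈ P.sup id := hP.2.2 ▸ hj0
  simpa using Finset.mem_sup.1 this

lemma partSum_split (F : Finset (Fin n) → ℝ) {Y : Finset (Fin n)} {j0 : Fin n} (hj0 : j0 ∈ Y) :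
    partSum F Y
      = ∑ S ∈ Y.powerset.filter (fun S => j0 ∈ S), F S * partSum F (Y \ S) := by
  have hmaps : ∀ P ∈ parts Y, bl j0 P ∈ Y.powerset.filter (fun S => j0 ∈ S) := by
    intro P hP
    rw [mem_parts] at hP
    obtain ⟨B, hB, hjB⟩ := exists_block hP hj0
    rw [bl_eq hP hB hjB]
    refine Finset.mem_filter.2 ⟨Finset.mem_powerset.2 ?_, hjB⟩
    have := Finset.le_sup (f := id) hB
    rw [hP.2.2] at this
    exact this
  rw [partSum, ← Finset.sum_fiberwise_of_maps_to hmaps (fun P => ∏ B ∈ P, F B)]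
  refine Finset.sum_congr rfl ?_
  intro S hS
  obtain ⟨hSY, hj0S⟩ : S ⊆ Y ∧ j0 ∈ S := by
    have := Finset.mem_filter.1 hS
    exact ⟨Finset.mem_powerset.1 this.1, this.2⟩
  have key : (∑ P ∈ (parts Y).filter (fun P => bl j0 P = S), ∏ B ∈ P, F B)
      = ∑ P' ∈ parts (Y \ S), F S * ∏ B ∈ P', F B := by
    refine Finset.sum_nbij' (fun P => P.erase S) (fun P' => insert S P') ?_ ?_ ?_ ?_ ?_
    · intro P hP
      obtain ⟨hPp, hbl⟩ := Finset.mem_filter.1 hP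
      rw [mem_parts] at hPp
      have hSP : S ∈ P := by
        obtain ⟨B, hB, hjB⟩ := exists_block hPp hj0
        rw [← hbl, bl_eq hPp hB hjB]; exact hB
      rw [mem_parts]
      refine ⟨fun B hB => hPp.1 B (Finset.mem_of_mem_erase hB), ?_, ?_⟩
      · exact Set.PairwiseDisjoint.subset hPp.2.1 (by exact_mod_cast Finset.erase_subset _ _)
      · apply le_antisymm
        · apply Finset.sup_le
          intro B hB
          have hBP := Finset.mem_of_mem_erase hB
          have hBY : B ⊆ Y := by
            have := Finset.le_sup (f := id) hBP
            rwa [hPp.2.2] at this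
          have hBS : Disjoint B S :=
            hPp.2.1 (by exact_mod_cast hBP) (by exact_mod_cast hSP)
              (Finset.ne_of_mem_erase hB)
          exact Finset.subset_sdiff.2 ⟨hBY, hBS⟩
        · intro y hy
          obtain ⟨hyY, hyS⟩ := Finset.mem_sdiff.1 hy
          obtain ⟨B, hB, hyB⟩ := exists_block hPp hyY
          have hBne : B ≠ S := fun h => hyS (h ▸ hyB)
          exact Finset.mem_sup.2 ⟨B, Finset.mem_erase.2 ⟨hBne, hB⟩, hyB⟩
    · intro P' hP'
      rw [mem_parts] at hP'
      have hSnot : S ∉ P' := by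
        intro hSP'
        have : S ≤ Y \ S := by
          have := Finset.le_sup (f := id) hSP'
          rwa [hP'.2.2] at this
        exact (Finset.mem_sdiff.1 (this hj0S)).2 hj0S
      have hpart : IsPartitionOf (insert S P') Y := by
        refine ⟨?_, ?_, ?_⟩
        · intro B hB
          rcases Finset.mem_insert.1 hB with rfl | hB
          · exact ⟨j0, hj0S⟩
          · exact hP'.1 B hB
        · rw [Finset.coe_insert]
          refine Set.PairwiseDisjoint.insert hP'.2.1 ?_
          intro B hB _
          have hBsub : B ≤ Y \ S := by
            have := Finset.le_sup (f := id) (by exact_mod_cast hB : B ∈ P')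
            rwa [hP'.2.2] at this
          have : Disjoint S B := (Finset.disjoint_sdiff.mono_right hBsub)
          exact this
        · rw [Finset.sup_insert, hP'.2.2]
          show S ∪ (Y \ S) = Y
          rw [Finset.union_sdiff_of_subset hSY]
      refine Finset.mem_filter.2 ⟨mem_parts.2 hpart, ?_⟩
      exact bl_eq hpart (Finset.mem_insert_self _ _) hj0S
    · intro P hP
      obtain ⟨hPp, hbl⟩ := Finset.mem_filter.1 hP
      rw [mem_parts] at hPp
      have hSP : S ∈ P := by
        obtain ⟨B, hB, hjB⟩ := exists_block hPp hj0
        rw [← hbl, bl_eq hPp hB hjB]; exact hB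
      exact Finset.insert_erase hSP
    · intro P' hP'
      rw [mem_parts] at hP'
      apply Finset.erase_insert
      intro hSP'
      have : S ≤ Y \ S := by
        have := Finset.le_sup (f := id) hSP'
        rwa [hP'.2.2] at this
      exact (Finset.mem_sdiff.1 (this hj0S)).2 hj0S
    · intro P hP
      obtain ⟨hPp, hbl⟩ := Finset.mem_filter.1 hP
      rw [mem_parts] at hPp
      have hSP : S ∈ P := by
        obtain ⟨B, hB, hjB⟩ := exists_block hPp hj0
        rw [← hbl, bl_eq hPp hB hjB]; exact hB
      exact (Finset.mul_prod_erase P F hSP).symm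
  rw [key, partSum, Finset.mul_sum]

lemma parts_empty : parts (∅ : Finset (Fin n)) = {∅} := by
  ext P
  rw [mem_parts, Finset.mem_singleton]
  constructor
  · intro hP
    rcases Finset.eq_empty_or_nonempty P with rfl | ⟨B, hB⟩
    · rfl
    · exfalso
      have hBsub : B ≤ (∅ : Finset (Fin n)) := by
        have := Finset.le_sup (f := id) hB
        rwa [hP.2.2] at this
      obtain ⟨x, hx⟩ := hP.1 B hB
      exact absurd (hBsub hx) (Finset.notMem_empty x)
  · rintro rfl
    exact ⟨fun B hB => absurd hB (Finset.notMem_empty B), by simp, by simp⟩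

lemma allSum_eq_partSum (Y : Finset (Fin n)) : allSum g Y = partSum (cc g) Y := by
  induction Y using Finset.strongInduction with
  | _ Y ih =>
    rcases Y.eq_empty_or_nonempty with rfl | ⟨j0, hj0⟩
    · rw [allSum, partSum, parts_empty, pairsIn_empty]
      simp
    · rw [allSum_split g hj0, partSum_split (cc g) hj0]
      refine Finset.sum_congr rfl fun S hS => ?_
      obtain ⟨hSY, hj0S⟩ : S ⊆ Y ∧ j0 ∈ S := by
        have := Finset.mem_filter.1 hS
        exact ⟨Finset.mem_powerset.1 this.1, this.2⟩
      rw [ih _ (Finset.sdiff_ssubset hSY ⟨j0, hj0S⟩)]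

end BBF
namespace BBF

open Finset
open scoped Classical

variable {n : ℕ} (g : Matrix (Fin n) (Fin n) ℝ)

lemma pairsIn_insert {a : Fin n} {Y : Finset (Fin n)} (ha : a ∉ Y) :
    pairsIn (insert a Y) = (Y.image fun b => s(a, b)) ∪ pairsIn Y := by
  ext e
  induction e with
  | _ x y =>
    simp only [Finset.mem_union, Finset.mem_image, mk_mem_pairsIn, Finset.mem_insert]
    constructor
    · rintro ⟨hxy, hx | hx, hy | hy⟩
      · exact absurd (hx.trans hy.symm) hxy
      · subst hx; exact Or.inl ⟨y, hy, rfl⟩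
      · subst hy; exact Or.inl ⟨x, hx, Sym2.eq_swap⟩
      · exact Or.inr ⟨hxy, hx, hy⟩
    · rintro (⟨b, hb, he⟩ | ⟨hxy, hx, hy⟩)
      · rw [Sym2.eq_iff] at he
        rcases he with ⟨rfl, rfl⟩ | ⟨rfl, rfl⟩
        · exact ⟨fun h => ha (h ▸ hb), Or.inl rfl, Or.inr hb⟩
        · exact ⟨fun h => ha (h.symm ▸ hb), Or.inr hb, Or.inl rfl⟩
      · exact ⟨hxy, Or.inr hx, Or.inr hy⟩

lemma V_split (Y : Finset (Fin n)) :
    (∑ i ∈ Y, ∑ i' ∈ Y, g i i') = (∑ j ∈ Y, g j j) + ∑ e ∈ pairsIn Y, vv g e := by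
  induction Y using Finset.induction_on with
  | empty => simp
  | insert a Y ha ih =>
    have himg : ∀ b ∈ Y, ∀ c ∈ Y, s(a, b) = s(a, c) → b = c := by
      intro b _ c _ h
      exact Sym2.congr_right.1 h
    have hdisj : Disjoint (Y.image fun b => s(a, b)) (pairsIn Y) := by
      rw [Finset.disjoint_left]
      rintro e he hp
      obtain ⟨b, hb, rfl⟩ := Finset.mem_image.1 he
      exact ha (mk_mem_pairsIn.1 hp).2.1
    rw [pairsIn_insert ha, Finset.sum_union hdisj, Finset.sum_image himg]
    simp only [Finset.sum_insert ha, vv_mk]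
    rw [Finset.sum_add_distrib, ih, Finset.sum_add_distrib]
    ring

lemma one_add_zeta (e : Sym2 (Fin n)) : 1 + zeta g e = Real.exp (-(vv g e)) := by
  rw [zeta]; ring

lemma allSum_eq_prod (Y : Finset (Fin n)) :
    allSum g Y = ∏ e ∈ pairsIn Y, Real.exp (-(vv g e)) := by
  have := Finset.prod_add (fun e => zeta g e) (fun _ => (1 : ℝ)) (pairsIn Y)
  simp only [Finset.prod_const_one, mul_one] at this
  rw [allSum, ← this]
  refine Finset.prod_congr rfl fun e _ => ?_
  rw [← one_add_zeta]; ring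

/-- the connected-graph representation candidate for the Ursell function. -/
noncomputable def psi (Y : Finset (Fin n)) : ℝ :=
  (∏ j ∈ Y, Real.exp (-(g j j))) * cc g Y

lemma partSum_psi (Y : Finset (Fin n)) :
    partSum (psi g) Y = Real.exp (-(∑ i ∈ Y, ∑ i' ∈ Y, g i i')) := by
  have key : ∀ P ∈ parts Y,
      ∏ B ∈ P, psi g B = (∏ j ∈ Y, Real.exp (-(g j j))) * ∏ B ∈ P, cc g B := by
    intro P hP
    rw [mem_parts] at hP
    have hY : Y = P.biUnion id := by rw [← Finset.sup_eq_biUnion, hP.2.2]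
    simp only [psi]
    rw [Finset.prod_mul_distrib]
    congr 1
    rw [hY, Finset.prod_biUnion hP.2.1]
    rfl
  rw [partSum, Finset.sum_congr rfl key, ← Finset.mul_sum]
  rw [show (∑ P ∈ parts Y, ∏ B ∈ P, cc g B) = partSum (cc g) Y from rfl]
  rw [← allSum_eq_partSum, allSum_eq_prod, V_split]
  rw [neg_add, Real.exp_add]
  congr 1
  · rw [← Real.exp_sum]
    congr 1
    rw [← Finset.sum_neg_distrib]
  · rw [← Real.exp_sum]
    congr 1
    rw [← Finset.sum_neg_distrib]

lemma singleton_partition (Y : Finset (Fin n)) (hY : Y.Nonempty) :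
    IsPartitionOf {Y} Y := by
  refine ⟨?_, ?_, ?_⟩
  · intro B hB
    rw [Finset.mem_singleton] at hB
    exact hB ▸ hY
  · rw [Finset.coe_singleton]
    exact Set.pairwiseDisjoint_singleton _ _
  · exact Finset.sup_singleton

lemma blocks_proper {P : Finset (Finset (Fin n))} {Y : Finset (Fin n)}
    (hP : IsPartitionOf P Y) (hPne : P ≠ {Y}) {B : Finset (Fin n)} (hB : B ∈ P) : B ⊂ Y := by
  have hBY : B ⊆ Y := by
    have := Finset.le_sup (f := id) hB
    rwa [hP.2.2] at this
  refine Finset.ssubset_iff_subset_ne.2 ⟨hBY, ?_⟩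
  rintro rfl
  apply hPne
  apply Finset.Subset.antisymm
  · intro B' hB'
    rw [Finset.mem_singleton]
    by_contra hne
    have hd := hP.2.1 (by exact_mod_cast hB') (by exact_mod_cast hB) hne
    obtain ⟨x, hx⟩ := hP.1 B' hB'
    have hxB : x ∈ B := by
      have := Finset.le_sup (f := id) hB'
      rw [hP.2.2] at this
      exact this hx
    exact Finset.disjoint_left.1 hd hx hxB
  · intro B' hB'
    rw [Finset.mem_singleton] at hB'
    exact hB' ▸ hB

lemma cc_singleton (j : Fin n) : cc g {j} = 1 := by
  have h1 : conns ({j} : Finset (Fin n)) = {∅} := by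
    rw [conns, pairsIn_singleton]
    ext E
    simp only [Finset.mem_filter, Finset.mem_powerset, Finset.subset_empty,
      Finset.mem_singleton]
    constructor
    · rintro ⟨h, _⟩; exact h
    · rintro rfl
      refine ⟨rfl, ?_⟩
      intro x hx y hy
      subst hx
      subst hy
      exact Reach.rfl'
  rw [cc, h1]
  simp

lemma phi_eq_psi (φ : Finset (Fin n) → ℝ)
    (hφ1 : ∀ j : Fin n, φ {j} = Real.exp (-(∑ i ∈ ({j} : Finset (Fin n)),
        ∑ i' ∈ ({j} : Finset (Fin n)), g i i')))
    (hφ2 : ∀ Y : Finset (Fin n), 2 ≤ Y.card →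
        Real.exp (-(∑ i ∈ Y, ∑ i' ∈ Y, g i i')) =
          ∑ P ∈ Finset.univ.filter (fun P : Finset (Finset (Fin n)) => IsPartitionOf P Y),
            ∏ B ∈ P, φ B) :
    ∀ Y : Finset (Fin n), Y.Nonempty → φ Y = psi g Y := by
  intro Y
  induction Y using Finset.strongInduction with
  | _ Y ih =>
    intro hY
    rcases le_or_gt 2 Y.card with hcard | hcard
    · -- the inductive case
      have hpart : partSum φ Y = partSum (psi g) Y ∨ True := Or.inr trivial
      have hsplit := hφ2 Y hcard
      rw [show (Finset.univ.filter fun P : Finset (Finset (Fin n)) => IsPartitionOf P Y)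
          = parts Y from rfl] at hsplit
      have hYmem : ({Y} : Finset (Finset (Fin n))) ∈ parts Y :=
        mem_parts.2 (singleton_partition Y hY)
      have hrest : ∀ P ∈ (parts Y).erase {Y}, ∏ B ∈ P, φ B = ∏ B ∈ P, psi g B := by
        intro P hP
        obtain ⟨hPne, hPmem⟩ := Finset.mem_erase.1 hP
        rw [mem_parts] at hPmem
        refine Finset.prod_congr rfl fun B hB => ?_
        have hproper := blocks_proper hPmem hPne hB
        exact ih B hproper (hPmem.1 B hB)
      have e1 : Real.exp (-(∑ i ∈ Y, ∑ i' ∈ Y, g i i'))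
          = φ Y + ∑ P ∈ (parts Y).erase {Y}, ∏ B ∈ P, φ B := by
        rw [hsplit, ← Finset.add_sum_erase _ _ hYmem, Finset.prod_singleton]
      have e2 : Real.exp (-(∑ i ∈ Y, ∑ i' ∈ Y, g i i'))
          = psi g Y + ∑ P ∈ (parts Y).erase {Y}, ∏ B ∈ P, psi g B := by
        rw [← partSum_psi, partSum, ← Finset.add_sum_erase _ _ hYmem, Finset.prod_singleton]
      rw [Finset.sum_congr rfl hrest] at e1
      linarith [e1, e2]
    · -- singleton case
      have h1 : Y.card = 1 := by
        have := Finset.card_pos.2 hY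
        omega
      obtain ⟨j, rfl⟩ := Finset.card_eq_one.1 h1
      rw [hφ1 j, psi, cc_singleton, mul_one]
      simp

end BBF
namespace BBF

open Finset SimpleGraph
open scoped Classical

variable {n : ℕ} (g : Matrix (Fin n) (Fin n) ℝ)

lemma sym2_exists_eq (e : Sym2 (Fin n)) : ∃ a b : Fin n, e = s(a, b) := by
  induction e with
  | _ a b => exact ⟨a, b, rfl⟩

/-- an arbitrary injective index on pairs. -/
noncomputable def idx : Sym2 (Fin n) → ℕ := fun e => (Fintype.equivFin (Sym2 (Fin n)) e : ℕ)

lemma idx_inj {e f : Sym2 (Fin n)} (h : idx e = idx f) : e = f := by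
  have := Fin.val_injective h
  exact (Fintype.equivFin (Sym2 (Fin n))).injective this

/-- a strict linear order on pairs compatible with the coupling values. -/
noncomputable def prec (e f : Sym2 (Fin n)) : Prop :=
  vv g e < vv g f ∨ (vv g e = vv g f ∧ idx e < idx f)

lemma prec_irrefl (e : Sym2 (Fin n)) : ¬ prec g e e := by
  rintro (h | ⟨_, h⟩) <;> exact lt_irrefl _ h

lemma prec_trans {e f h : Sym2 (Fin n)} (h1 : prec g e f) (h2 : prec g f h) : prec g e h := by
  rcases h1 with h1 | ⟨h1, h1'⟩ <;> rcases h2 with h2 | ⟨h2, h2'⟩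
  · exact Or.inl (h1.trans h2)
  · exact Or.inl (h2 ▸ h1)
  · exact Or.inl (h1 ▸ h2)
  · exact Or.inr ⟨h1.trans h2, h1'.trans h2'⟩

lemma prec_total {e f : Sym2 (Fin n)} (hne : e ≠ f) : prec g e f ∨ prec g f e := by
  rcases lt_trichotomy (vv g e) (vv g f) with h | h | h
  · exact Or.inl (Or.inl h)
  · rcases lt_trichotomy (idx e) (idx f) with h' | h' | h'
    · exact Or.inl (Or.inr ⟨h, h'⟩)
    · exact absurd (idx_inj h') hne
    · exact Or.inr (Or.inr ⟨h.symm, h'⟩)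
  · exact Or.inr (Or.inl h)

lemma prec_vv_le {e f : Sym2 (Fin n)} (h : prec g e f) : vv g e ≤ vv g f := by
  rcases h with h | ⟨h, _⟩
  · exact le_of_lt h
  · exact le_of_eq h

noncomputable def rank (e : Sym2 (Fin n)) : ℕ :=
  (Finset.univ.filter fun f => prec g f e).card

lemma rank_lt_of_prec {e f : Sym2 (Fin n)} (h : prec g e f) : rank g e < rank g f := by
  apply Finset.card_lt_card
  rw [Finset.ssubset_iff_of_subset]
  · exact ⟨e, Finset.mem_filter.2 ⟨Finset.mem_univ _, h⟩,
      fun hmem => prec_irrefl g e (Finset.mem_filter.1 hmem).2⟩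
  · intro x hx
    exact Finset.mem_filter.2 ⟨Finset.mem_univ _,
      prec_trans g (Finset.mem_filter.1 hx).2 h⟩

/-- the simple graph with edge set `E`. -/
def gr (E : Finset (Sym2 (Fin n))) : SimpleGraph (Fin n) := SimpleGraph.fromEdgeSet ↑E

lemma gr_adj {E : Finset (Sym2 (Fin n))} {x y : Fin n} :
    (gr E).Adj x y ↔ s(x, y) ∈ E ∧ x ≠ y := by
  rw [gr, SimpleGraph.fromEdgeSet_adj, Finset.mem_coe]

lemma gr_edgeSet {E : Finset (Sym2 (Fin n))} (hE : ∀ e ∈ E, ¬ e.IsDiag) :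
    (gr E).edgeSet = ↑E := by
  rw [gr, SimpleGraph.edgeSet_fromEdgeSet]
  ext e
  simp only [Set.mem_diff, Finset.mem_coe, Set.mem_setOf_eq]
  exact ⟨fun h => h.1, fun h => ⟨h, hE e h⟩⟩

lemma gr_edgeFinset {E : Finset (Sym2 (Fin n))} (hE : ∀ e ∈ E, ¬ e.IsDiag) :
    (gr E).edgeFinset = E := by
  apply Finset.coe_injective
  rw [SimpleGraph.coe_edgeFinset, gr_edgeSet hE]

lemma gr_edgeFinset_eq_self (G : SimpleGraph (Fin n)) : gr G.edgeFinset = G := by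
  rw [gr]
  rw [show ((G.edgeFinset : Finset (Sym2 (Fin n))) : Set (Sym2 (Fin n))) = G.edgeSet from
    SimpleGraph.coe_edgeFinset G]
  exact SimpleGraph.fromEdgeSet_edgeSet G

/-- `f` is an edge of `T` lying on the (every) `T`-path between the endpoints of `e`. -/
def OnPath (T : SimpleGraph (Fin n)) (e f : Sym2 (Fin n)) : Prop :=
  f ∈ T.edgeFinset ∧ ∀ x y : Fin n, e = s(x, y) → ¬(T.deleteEdges {f}).Reachable x y

/-- if the endpoints of a deleted edge stay connected, reachability is unaffected. -/
lemma walk_del {H : SimpleGraph (Fin n)} {a b u v : Fin n}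
    (hre : (H.deleteEdges {s(a, b)}).Reachable a b) (p : H.Walk u v) :
    (H.deleteEdges {s(a, b)}).Reachable u v := by
  induction p with
  | nil => exact Reachable.refl _
  | cons h q ih =>
    rename_i c d w
    by_cases he : s(c, d) = s(a, b)
    · rw [Sym2.eq_iff] at he
      rcases he with ⟨rfl, rfl⟩ | ⟨rfl, rfl⟩
      · exact hre.trans ih
      · exact hre.symm.trans ih
    · have : (H.deleteEdges {s(a, b)}).Adj c d := by
        rw [SimpleGraph.deleteEdges_adj]
        exact ⟨h, by simpa using he⟩
      exact this.reachable.trans ih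

lemma walk_two_classes {H : SimpleGraph (Fin n)} {a b : Fin n} :
    ∀ {u v : Fin n}, H.Walk u v →
      (H.deleteEdges {s(a, b)}).Reachable u v ∨
      (H.deleteEdges {s(a, b)}).Reachable u a ∨ (H.deleteEdges {s(a, b)}).Reachable u b := by
  intro u v p
  induction p with
  | nil => exact Or.inl (Reachable.refl _)
  | cons h q ih =>
    rename_i c d w
    by_cases he : s(c, d) = s(a, b)
    · rw [Sym2.eq_iff] at he
      rcases he with ⟨rfl, rfl⟩ | ⟨rfl, rfl⟩
      · exact Or.inr (Or.inl (Reachable.refl _))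
      · exact Or.inr (Or.inr (Reachable.refl _))
    · have hcd : (H.deleteEdges {s(a, b)}).Adj c d := by
        rw [SimpleGraph.deleteEdges_adj]
        exact ⟨h, by simpa using he⟩
      rcases ih with ih | ih | ih
      · exact Or.inl (hcd.reachable.trans ih)
      · exact Or.inr (Or.inl (hcd.reachable.trans ih))
      · exact Or.inr (Or.inr (hcd.reachable.trans ih))

lemma two_classes {T : SimpleGraph (Fin n)} (hT : T.Connected) (a b u : Fin n) :
    (T.deleteEdges {s(a, b)}).Reachable u a ∨ (T.deleteEdges {s(a, b)}).Reachable u b := by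
  obtain ⟨p⟩ := hT u a
  rcases walk_two_classes p with h | h | h
  · exact Or.inl h
  · exact Or.inl h
  · exact Or.inr h

/-- deleting an edge on a path in an acyclic graph separates the path's endpoints. -/
lemma path_edge_cut {T : SimpleGraph (Fin n)} (hT : T.IsAcyclic) {x y : Fin n}
    {p : T.Walk x y} (hp : p.IsPath) {f : Sym2 (Fin n)} (hf : f ∈ p.edges) :
    ¬(T.deleteEdges {f}).Reachable x y := by
  intro hre
  obtain ⟨q0⟩ := hre
  set q := q0.toPath.1 with hq
  have hqp : q.IsPath := q0.toPath.2
  have hqe : ∀ e ∈ q.edges, e ∈ T.edgeSet := by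
    intro e he
    have := q.edges_subset_edgeSet he
    rw [SimpleGraph.edgeSet_deleteEdges] at this
    exact this.1
  have hqf : f ∉ q.edges := by
    intro hmem
    have := q.edges_subset_edgeSet hmem
    rw [SimpleGraph.edgeSet_deleteEdges] at this
    exact this.2 rfl
  have hQ : (q.transfer T hqe).IsPath := hqp.transfer _
  have := hT.path_unique ⟨p, hp⟩ ⟨q.transfer T hqe, hQ⟩
  have hpq : p = q.transfer T hqe := by
    exact congrArg Subtype.val this
  rw [hpq, SimpleGraph.Walk.edges_transfer] at hf
  exact hqf hf

/-- an edge on-path lies on every walk between the endpoints. -/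
lemma onPath_mem_walk {T : SimpleGraph (Fin n)} {e f : Sym2 (Fin n)} (h : OnPath T e f)
    {x y : Fin n} (hxy : e = s(x, y)) (p : T.Walk x y) : f ∈ p.edges := by
  by_contra hf
  apply h.2 x y hxy
  refine ⟨p.toDeleteEdges {f} ?_⟩
  intro e' he'
  simp only [Set.mem_singleton_iff]
  rintro rfl
  exact hf he'

end BBF
namespace BBF

open Finset SimpleGraph
open scoped Classical

variable {n : ℕ} (g : Matrix (Fin n) (Fin n) ℝ)

lemma connected_del {G : SimpleGraph (Fin n)} (hG : G.Connected) {a b : Fin n}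
    (hre : (G.deleteEdges {s(a, b)}).Reachable a b) :
    (G.deleteEdges {s(a, b)}).Connected := by
  rw [SimpleGraph.connected_iff] at hG ⊢
  refine ⟨fun u v => ?_, hG.2⟩
  obtain ⟨p⟩ := hG.1 u v
  exact walk_del hre p

lemma edgeFinset_del {G : SimpleGraph (Fin n)} {e : Sym2 (Fin n)} :
    (G.deleteEdges {e}).edgeFinset = G.edgeFinset.erase e := by
  apply Finset.coe_injective
  rw [SimpleGraph.coe_edgeFinset, SimpleGraph.edgeSet_deleteEdges, Finset.coe_erase,
    SimpleGraph.coe_edgeFinset]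

lemma deleteEdges_mono_left {H K : SimpleGraph (Fin n)} (h : H ≤ K) (s : Set (Sym2 (Fin n))) :
    H.deleteEdges s ≤ K.deleteEdges s := by
  intro u v huv
  rw [SimpleGraph.deleteEdges_adj] at huv ⊢
  exact ⟨h huv.1, huv.2⟩

/-- `T` is the locally minimal spanning tree of `G`. -/
def locMin (G T : SimpleGraph (Fin n)) : Prop :=
  T ≤ G ∧ T.IsTree ∧
    ∀ e ∈ G.edgeFinset, e ∉ T.edgeFinset → ∀ f, OnPath T e f → prec g f e

lemma exists_locMin_aux :
    ∀ (m : ℕ) (G : SimpleGraph (Fin n)), G.edgeFinset.card = m → G.Connected →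
      ∃ T, locMin g G T := by
  intro m
  induction m using Nat.strong_induction_on with
  | _ m ih =>
    intro G hm hG
    by_cases hac : G.IsAcyclic
    · exact ⟨G, le_refl G, ⟨hG, hac⟩, fun e he hne => absurd he hne⟩
    · have hNB : (G.edgeFinset.filter fun e => ¬ G.IsBridge e).Nonempty := by
        rw [SimpleGraph.isAcyclic_iff_forall_edge_isBridge] at hac
        push_neg at hac
        obtain ⟨e, he, hnb⟩ := hac
        exact ⟨e, Finset.mem_filter.2 ⟨SimpleGraph.mem_edgeFinset.2 he, hnb⟩⟩
      obtain ⟨estar, hestar, hmax⟩ :=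
        Finset.exists_max_image _ (rank g) hNB
      obtain ⟨hestarG, hestarNB⟩ := Finset.mem_filter.1 hestar
      obtain ⟨x, y, rfl⟩ := sym2_exists_eq estar
      have hadj : G.Adj x y := by simpa using hestarG
      have hre : (G.deleteEdges {s(x, y)}).Reachable x y := by
        rw [SimpleGraph.isBridge_iff] at hestarNB
        push_neg at hestarNB
        exact hestarNB
      have hconn := connected_del hG hre
      have hcard : (G.deleteEdges {s(x, y)}).edgeFinset.card < m := by
        rw [edgeFinset_del, ← hm]
        exact Finset.card_erase_lt_of_mem hestarG
      obtain ⟨T, hTle, hTtree, hTmin⟩ := ih _ hcard _ (by convert rfl) hconn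
      have hTleG : T ≤ G := hTle.trans (SimpleGraph.deleteEdges_le _)
      have hestar_notT : s(x, y) ∉ T.edgeFinset := by
        intro hmem
        have := (SimpleGraph.edgeFinset_subset_edgeFinset.2 hTle) hmem
        rw [edgeFinset_del] at this
        exact (Finset.mem_erase.1 this).1 rfl
      refine ⟨T, hTleG, hTtree, ?_⟩
      intro e he hneT f hOP
      by_cases hee : e = s(x, y)
      · subst hee
        obtain ⟨hfT, hsep⟩ := hOP
        obtain ⟨fa, fb, rfl⟩ := sym2_exists_eq f
        have hfne : s(fa, fb) ≠ s(x, y) := by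
          intro hfe
          exact hestar_notT (hfe ▸ hfT)
        have hTadj : T.Adj fa fb := by simpa using hfT
        have hnxy : ¬(T.deleteEdges {s(fa, fb)}).Reachable x y := hsep x y rfl
        have hcx := two_classes hTtree.isConnected fa fb x
        have hcy := two_classes hTtree.isConnected fa fb y
        -- show fa, fb reachable in G - f
        have hreach : (G.deleteEdges {s(fa, fb)}).Reachable fa fb := by
          have hmono : T.deleteEdges {s(fa, fb)} ≤ G.deleteEdges {s(fa, fb)} :=
            deleteEdges_mono_left hTleG _
          have hxyadj : (G.deleteEdges {s(fa, fb)}).Adj x y := by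
            rw [SimpleGraph.deleteEdges_adj]
            refine ⟨hadj, ?_⟩
            simp only [Set.mem_singleton_iff]
            exact fun h => hfne h.symm
          rcases hcx with hx | hx <;> rcases hcy with hy | hy
          · exact absurd (hx.trans hy.symm) hnxy
          · exact (hx.mono hmono).symm.trans (hxyadj.reachable.trans (hy.mono hmono))
          · exact ((hy.mono hmono).symm.trans (hxyadj.symm.reachable.trans (hx.mono hmono)))
          · exact absurd (hx.trans hy.symm) hnxy
        have hfNB : s(fa, fb) ∈ G.edgeFinset.filter fun e => ¬ G.IsBridge e := by
          refine Finset.mem_filter.2 ⟨SimpleGraph.edgeFinset_subset_edgeFinset.2 hTleG hfT, ?_⟩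
          rw [SimpleGraph.isBridge_iff]
          push_neg
          exact hreach
        have hrank : rank g s(fa, fb) ≤ rank g s(x, y) := hmax _ hfNB
        rcases prec_total g hfne with h | h
        · exact h
        · exact absurd (rank_lt_of_prec g h) (by omega)
      · have heG' : e ∈ (G.deleteEdges {s(x, y)}).edgeFinset := by
          rw [edgeFinset_del]
          exact Finset.mem_erase.2 ⟨hee, he⟩
        exact hTmin e (by convert heG') hneT f hOP

lemma exists_locMin (G : SimpleGraph (Fin n)) (hG : G.Connected) : ∃ T, locMin g G T :=
  exists_locMin_aux g _ G rfl hG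

end BBF
namespace BBF

open Finset SimpleGraph
open scoped Classical

variable {n : ℕ} (g : Matrix (Fin n) (Fin n) ℝ)

lemma locMin_unique_aux {G T₁ T₂ : SimpleGraph (Fin n)} (h₁ : locMin g G T₁)
    (h₂ : locMin g G T₂) {f : Sym2 (Fin n)} (hf₁ : f ∈ T₁.edgeFinset)
    (hf₂ : f ∉ T₂.edgeFinset)
    (hmin : ∀ h ∈ T₂.edgeFinset \ T₁.edgeFinset, rank g f ≤ rank g h) : False := by
  obtain ⟨a, b, rfl⟩ := sym2_exists_eq f
  have hadj₁ : T₁.Adj a b := by simpa using hf₁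
  have hfG : s(a, b) ∈ G.edgeFinset :=
    SimpleGraph.edgeFinset_subset_edgeFinset.2 h₁.1 hf₁
  -- a path from a to b in T₂
  obtain ⟨w⟩ := h₂.2.1.isConnected a b
  set q := w.toPath.1 with hqdef
  have hq : q.IsPath := w.toPath.2
  -- q contains an edge not in T₁
  have hex : ∃ h ∈ q.edges, h ∉ T₁.edgeFinset := by
    by_contra hall
    push_neg at hall
    have hcut : ¬(T₁.deleteEdges {s(a, b)}).Reachable a b := by
      have : T₁.IsBridge s(a, b) :=
        (SimpleGraph.isAcyclic_iff_forall_adj_isBridge.1 h₁.2.1.IsAcyclic) hadj₁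
      rw [SimpleGraph.isBridge_iff] at this
      exact this
    apply hcut
    refine ⟨q.transfer _ ?_⟩
    intro e he
    rw [SimpleGraph.edgeSet_deleteEdges]
    refine ⟨SimpleGraph.mem_edgeFinset.1 (hall e he), ?_⟩
    simp only [Set.mem_singleton_iff]
    rintro rfl
    exact hf₂ (SimpleGraph.mem_edgeFinset.2 (q.edges_subset_edgeSet he))
  obtain ⟨h, hhq, hhT₁⟩ := hex
  have hhT₂ : h ∈ T₂.edgeFinset := SimpleGraph.mem_edgeFinset.2 (q.edges_subset_edgeSet hhq)
  -- h is on the path of s(a,b) in T₂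
  have hOP : OnPath T₂ s(a, b) h := by
    refine ⟨hhT₂, ?_⟩
    intro x y hxy
    rw [Sym2.eq_iff] at hxy
    rcases hxy with ⟨rfl, rfl⟩ | ⟨rfl, rfl⟩
    · exact path_edge_cut h₂.2.1.IsAcyclic hq hhq
    · intro hre
      exact path_edge_cut h₂.2.1.IsAcyclic hq hhq hre.symm
  have hprec : prec g h s(a, b) := h₂.2.2 _ hfG hf₂ h hOP
  have hrank : rank g s(a, b) ≤ rank g h :=
    hmin h (Finset.mem_sdiff.2 ⟨hhT₂, hhT₁⟩)
  exact absurd (rank_lt_of_prec g hprec) (by omega)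

lemma locMin_unique {G T₁ T₂ : SimpleGraph (Fin n)} (h₁ : locMin g G T₁)
    (h₂ : locMin g G T₂) : T₁ = T₂ := by
  by_contra hne
  have hD : ((T₁.edgeFinset \ T₂.edgeFinset) ∪ (T₂.edgeFinset \ T₁.edgeFinset)).Nonempty := by
    rw [Finset.nonempty_iff_ne_empty]
    intro hempty
    rw [Finset.union_eq_empty, Finset.sdiff_eq_empty_iff_subset,
      Finset.sdiff_eq_empty_iff_subset] at hempty
    apply hne
    rw [← SimpleGraph.edgeSet_inj]
    apply Set.Subset.antisymm
    · rw [← SimpleGraph.coe_edgeFinset, ← SimpleGraph.coe_edgeFinset]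
      exact_mod_cast hempty.1
    · rw [← SimpleGraph.coe_edgeFinset, ← SimpleGraph.coe_edgeFinset]
      exact_mod_cast hempty.2
  obtain ⟨f, hfD, hfmin⟩ := Finset.exists_min_image _ (rank g) hD
  rcases Finset.mem_union.1 hfD with hf | hf
  · obtain ⟨hf₁, hf₂⟩ := Finset.mem_sdiff.1 hf
    exact locMin_unique_aux g h₁ h₂ hf₁ hf₂
      (fun h hh => hfmin h (Finset.mem_union.2 (Or.inr hh)))
  · obtain ⟨hf₂, hf₁⟩ := Finset.mem_sdiff.1 hf
    exact locMin_unique_aux g h₂ h₁ hf₂ hf₁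
      (fun h hh => hfmin h (Finset.mem_union.2 (Or.inl hh)))

end BBF
namespace BBF

open Finset SimpleGraph
open scoped Classical

variable {n : ℕ} (g : Matrix (Fin n) (Fin n) ℝ)

/-- the allowed extra (non-tree) edges for the tree `T` in the minimal-tree partition scheme. -/
noncomputable def NT (T : SimpleGraph (Fin n)) : Finset (Sym2 (Fin n)) :=
  (pairsIn (Finset.univ : Finset (Fin n))).filter fun e =>
    e ∉ T.edgeFinset ∧ ∀ f, OnPath T e f → prec g f e

noncomputable def theTree (G : SimpleGraph (Fin n)) : SimpleGraph (Fin n) :=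
  if h : ∃ T, locMin g G T then h.choose else ⊥

lemma theTree_locMin {G : SimpleGraph (Fin n)} (hG : G.Connected) :
    locMin g G (theTree g G) := by
  have h : ∃ T, locMin g G T := exists_locMin g G hG
  rw [theTree, dif_pos h]
  exact h.choose_spec

lemma theTree_eq {G T : SimpleGraph (Fin n)} (h : locMin g G T) : theTree g G = T := by
  have hG : G.Connected := h.2.1.isConnected.mono h.1
  exact locMin_unique g (theTree_locMin g hG) h

lemma reach_iff_reachable {E : Finset (Sym2 (Fin n))} (hE : ∀ e ∈ E, ¬ e.IsDiag) {x y : Fin n} :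
    Reach E x y ↔ (gr E).Reachable x y := by
  constructor
  · intro h
    induction h with
    | refl => exact Reachable.refl _
    | tail hu step ih =>
      rename_i b c
      have hbc : b ≠ c := by
        intro hbceq
        exact hE _ step (by simp [hbceq])
      exact ih.trans (SimpleGraph.Adj.reachable (gr_adj.2 ⟨step, hbc⟩))
  · intro h
    obtain ⟨p⟩ := h
    induction p with
    | nil => exact Reach.rfl'
    | cons h q ih =>
      exact Relation.ReflTransGen.head (gr_adj.1 h).1 ih

lemma mem_conns_univ {E : Finset (Sym2 (Fin n))} :
    E ∈ conns (Finset.univ : Finset (Fin n)) ↔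
      E ⊆ pairsIn Finset.univ ∧ ∀ x y : Fin n, Reach E x y := by
  rw [conns, Finset.mem_filter, Finset.mem_powerset]
  constructor
  · rintro ⟨h1, h2⟩
    exact ⟨h1, fun x y => h2 x (Finset.mem_univ x) y (Finset.mem_univ y)⟩
  · rintro ⟨h1, h2⟩
    exact ⟨h1, fun x _ y _ => h2 x y⟩

lemma nondiag_of_subset_pairs {E : Finset (Sym2 (Fin n))} (hE : E ⊆ pairsIn Finset.univ) :
    ∀ e ∈ E, ¬ e.IsDiag := fun e he => (mem_pairsIn.1 (hE he)).1

lemma cc_univ_eq (hn : 0 < n) :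
    cc g Finset.univ
      = ∑ G ∈ Finset.univ.filter (fun G : SimpleGraph (Fin n) => G.Connected),
          ∏ e ∈ G.edgeFinset, zeta g e := by
  have hne : Nonempty (Fin n) := Fin.pos_iff_nonempty.1 hn
  rw [cc]
  refine Finset.sum_nbij' (fun E => gr E) (fun G => G.edgeFinset) ?_ ?_ ?_ ?_ ?_
  · intro E hE
    obtain ⟨h1, h2⟩ := mem_conns_univ.1 hE
    refine Finset.mem_filter.2 ⟨Finset.mem_univ _, ?_⟩
    rw [SimpleGraph.connected_iff]
    refine ⟨fun x y => ?_, hne⟩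
    exact (reach_iff_reachable (nondiag_of_subset_pairs h1)).1 (h2 x y)
  · intro G hG
    have hGc : G.Connected := (Finset.mem_filter.1 hG).2
    refine mem_conns_univ.2 ⟨?_, ?_⟩
    · intro e he
      rw [mem_pairsIn]
      exact ⟨SimpleGraph.not_isDiag_of_mem_edgeSet G (SimpleGraph.mem_edgeFinset.1 he),
        fun x _ => Finset.mem_univ x⟩
    · intro x y
      have hnd : ∀ e ∈ G.edgeFinset, ¬ e.IsDiag := fun e he =>
        SimpleGraph.not_isDiag_of_mem_edgeSet G (SimpleGraph.mem_edgeFinset.1 he)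
      rw [reach_iff_reachable hnd, gr_edgeFinset_eq_self]
      exact hGc.preconnected x y
  · intro E hE
    exact gr_edgeFinset (nondiag_of_subset_pairs (mem_conns_univ.1 hE).1)
  · intro G _
    exact gr_edgeFinset_eq_self G
  · intro E hE
    rw [gr_edgeFinset (nondiag_of_subset_pairs (mem_conns_univ.1 hE).1)]

lemma sum_powerset_prod (s : Finset (Sym2 (Fin n))) (f : Sym2 (Fin n) → ℝ) :
    ∑ E ∈ s.powerset, ∏ e ∈ E, f e = ∏ e ∈ s, (1 + f e) := by
  have := Finset.prod_add f (fun _ => (1 : ℝ)) s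
  simp only [Finset.prod_const_one, mul_one] at this
  rw [← this]
  exact Finset.prod_congr rfl fun e _ => by ring

lemma scheme (hn : 0 < n) :
    cc g Finset.univ
      = ∑ T ∈ Finset.univ.filter (fun T : SimpleGraph (Fin n) => T.IsTree),
          (∏ e ∈ T.edgeFinset, zeta g e) * ∏ e ∈ NT g T, (1 + zeta g e) := by
  rw [cc_univ_eq g hn]
  have hmaps : ∀ G ∈ Finset.univ.filter (fun G : SimpleGraph (Fin n) => G.Connected),
      theTree g G ∈ Finset.univ.filter (fun T : SimpleGraph (Fin n) => T.IsTree) := by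
    intro G hG
    exact Finset.mem_filter.2 ⟨Finset.mem_univ _,
      (theTree_locMin g (Finset.mem_filter.1 hG).2).2.1⟩
  rw [← Finset.sum_fiberwise_of_maps_to hmaps (fun G => ∏ e ∈ G.edgeFinset, zeta g e)]
  refine Finset.sum_congr rfl ?_
  intro T hT
  have hTtree : T.IsTree := (Finset.mem_filter.1 hT).2
  have hNTsub : ∀ M ∈ (NT g T).powerset, ∀ e ∈ T.edgeFinset ∪ M, ¬ e.IsDiag := by
    intro M hM e he
    rcases Finset.mem_union.1 he with h | h
    · exact SimpleGraph.not_isDiag_of_mem_edgeSet T (SimpleGraph.mem_edgeFinset.1 h)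
    · exact (mem_pairsIn.1 (Finset.mem_filter.1
        ((Finset.mem_powerset.1 hM) h)).1).1
  have key : (∑ G ∈ (Finset.univ.filter
        (fun G : SimpleGraph (Fin n) => G.Connected)).filter (fun G => theTree g G = T),
        ∏ e ∈ G.edgeFinset, zeta g e)
      = ∑ M ∈ (NT g T).powerset, (∏ e ∈ T.edgeFinset, zeta g e) * ∏ e ∈ M, zeta g e := by
    refine Finset.sum_nbij' (fun G => G.edgeFinset \ T.edgeFinset)
      (fun M => gr (T.edgeFinset ∪ M)) ?_ ?_ ?_ ?_ ?_
    · intro G hG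
      obtain ⟨hGf, htt⟩ := Finset.mem_filter.1 hG
      have hGc : G.Connected := (Finset.mem_filter.1 hGf).2
      have hlm : locMin g G T := htt ▸ theTree_locMin g hGc
      refine Finset.mem_powerset.2 ?_
      intro e he
      obtain ⟨heG, heT⟩ := Finset.mem_sdiff.1 he
      refine Finset.mem_filter.2 ⟨?_, heT, fun f hOP => hlm.2.2 e heG heT f hOP⟩
      rw [mem_pairsIn]
      exact ⟨SimpleGraph.not_isDiag_of_mem_edgeSet G (SimpleGraph.mem_edgeFinset.1 heG),
        fun x _ => Finset.mem_univ x⟩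
    · intro M hM
      have hM' : M ⊆ NT g T := Finset.mem_powerset.1 hM
      have hedge : (gr (T.edgeFinset ∪ M)).edgeFinset = T.edgeFinset ∪ M :=
        gr_edgeFinset (hNTsub M hM)
      have hle : T ≤ gr (T.edgeFinset ∪ M) := by
        rw [← SimpleGraph.edgeFinset_subset_edgeFinset, hedge]
        exact Finset.subset_union_left
      have hconn : (gr (T.edgeFinset ∪ M)).Connected :=
        hTtree.isConnected.mono hle
      have hlm : locMin g (gr (T.edgeFinset ∪ M)) T := by
        refine ⟨hle, hTtree, ?_⟩
        intro e he hneT f hOP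
        rw [hedge] at he
        have heM : e ∈ M := by
          rcases Finset.mem_union.1 he with h | h
          · exact absurd h hneT
          · exact h
        exact (Finset.mem_filter.1 (hM' heM)).2.2 f hOP
      refine Finset.mem_filter.2 ⟨Finset.mem_filter.2 ⟨Finset.mem_univ _, hconn⟩, ?_⟩
      exact theTree_eq g hlm
    · intro G hG
      obtain ⟨hGf, htt⟩ := Finset.mem_filter.1 hG
      have hGc : G.Connected := (Finset.mem_filter.1 hGf).2
      have hlm : locMin g G T := htt ▸ theTree_locMin g hGc
      have hsub : T.edgeFinset ⊆ G.edgeFinset :=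
        SimpleGraph.edgeFinset_subset_edgeFinset.2 hlm.1
      rw [Finset.union_sdiff_of_subset hsub]
      exact gr_edgeFinset_eq_self G
    · intro M hM
      have hM' : M ⊆ NT g T := Finset.mem_powerset.1 hM
      have hdisj : Disjoint T.edgeFinset M := by
        rw [Finset.disjoint_right]
        intro e heM heT
        exact (Finset.mem_filter.1 (hM' heM)).2.1 heT
      rw [gr_edgeFinset (hNTsub M hM), Finset.union_sdiff_cancel_left hdisj]
    · intro G hG
      obtain ⟨hGf, htt⟩ := Finset.mem_filter.1 hG
      have hGc : G.Connected := (Finset.mem_filter.1 hGf).2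
      have hlm : locMin g G T := htt ▸ theTree_locMin g hGc
      have hsub : T.edgeFinset ⊆ G.edgeFinset :=
        SimpleGraph.edgeFinset_subset_edgeFinset.2 hlm.1
      have hdisj : Disjoint T.edgeFinset (G.edgeFinset \ T.edgeFinset) :=
        Finset.disjoint_sdiff
      rw [← Finset.prod_union hdisj, Finset.union_sdiff_of_subset hsub]
  rw [key, ← Finset.mul_sum, sum_powerset_prod]

end BBF
namespace BBF

open Finset SimpleGraph
open scoped Classical

variable {n : ℕ} (g : Matrix (Fin n) (Fin n) ℝ)

lemma sum_split (s t : Finset (Sym2 (Fin n))) (f : Sym2 (Fin n) → ℝ) :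
    ∑ e ∈ s, f e = (∑ e ∈ s ∩ t, f e) + ∑ e ∈ s \ t, f e := by
  rw [← Finset.sum_union]
  · congr 1
    ext e
    simp only [Finset.mem_union, Finset.mem_inter, Finset.mem_sdiff]
    tauto
  · rw [Finset.disjoint_left]
    intro e he he'
    exact (Finset.mem_sdiff.1 he').2 (Finset.mem_inter.1 he).2

lemma stab (hg : g.PosSemidef) (C : Finset (Fin n)) :
    0 ≤ ∑ i ∈ C, ∑ i' ∈ C, g i i' := by
  have hx := hg.dotProduct_mulVec_nonneg (fun i => if i ∈ C then (1 : ℝ) else 0)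
  have heq : dotProduct (star (fun i => if i ∈ C then (1 : ℝ) else 0))
      (g.mulVec (fun i => if i ∈ C then (1 : ℝ) else 0)) = ∑ i ∈ C, ∑ i' ∈ C, g i i' := by
    simp only [dotProduct, Matrix.mulVec, Pi.star_apply, star_trivial,
      mul_ite, mul_one, mul_zero, ite_mul, one_mul, zero_mul]
    rw [Finset.sum_ite_mem, Finset.univ_inter]
    refine Finset.sum_congr rfl fun i _ => ?_
    rw [Finset.sum_ite_mem, Finset.univ_inter]
  rwa [heq] at hx

section star

variable {T : SimpleGraph (Fin n)} (hT : T.IsTree)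

/-- the negative edges of the tree `T`. -/
noncomputable def NEG (T : SimpleGraph (Fin n)) : Finset (Sym2 (Fin n)) :=
  T.edgeFinset.filter fun e => vv g e < 0

lemma NEG_nondiag : ∀ e ∈ NEG g T, ¬ e.IsDiag := fun e he =>
  SimpleGraph.not_isDiag_of_mem_edgeSet T
    (SimpleGraph.mem_edgeFinset.1 (Finset.mem_filter.1 he).1)

/-- the negative-edge component of `j`. -/
noncomputable def cpt (T : SimpleGraph (Fin n)) (j : Fin n) : Finset (Fin n) :=
  Finset.univ.filter fun k => Reach (NEG g T) j k

lemma mem_cpt_self (j : Fin n) : j ∈ cpt g T j :=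
  Finset.mem_filter.2 ⟨Finset.mem_univ _, Reach.rfl'⟩

lemma cpt_eq_of_reach {j k : Fin n} (h : Reach (NEG g T) j k) : cpt g T j = cpt g T k := by
  ext x
  simp only [cpt, Finset.mem_filter, Finset.mem_univ, true_and]
  exact ⟨fun hx => h.symm.trans hx, fun hx => h.trans hx⟩

lemma mem_cpt_iff {j k : Fin n} : k ∈ cpt g T j ↔ Reach (NEG g T) j k := by
  simp [cpt]

noncomputable def comps (T : SimpleGraph (Fin n)) : Finset (Finset (Fin n)) :=
  Finset.univ.image (cpt g T)

lemma comps_disj : Set.PairwiseDisjoint ((comps g T : Set (Finset (Fin n)))) id := by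
  intro C hC C' hC' hne
  simp only [comps, Finset.coe_image, Set.mem_image] at hC hC'
  obtain ⟨j, _, rfl⟩ := hC
  obtain ⟨j', _, rfl⟩ := hC'
  rw [Function.onFun, Finset.disjoint_left]
  intro x hx hx'
  simp only [id] at hx hx'
  rw [mem_cpt_iff g] at hx hx'
  exact hne (((cpt_eq_of_reach g hx).trans (cpt_eq_of_reach g hx').symm))

/-- the pairs internal to components. -/
noncomputable def IE (T : SimpleGraph (Fin n)) : Finset (Sym2 (Fin n)) :=
  (comps g T).biUnion fun C => pairsIn C

lemma mem_IE_iff {x y : Fin n} (hxy : x ≠ y) :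
    s(x, y) ∈ IE g T ↔ Reach (NEG g T) x y := by
  constructor
  · intro h
    obtain ⟨C, hC, hmem⟩ := Finset.mem_biUnion.1 h
    obtain ⟨j, _, rfl⟩ := Finset.mem_image.1 hC
    obtain ⟨_, hx, hy⟩ := mk_mem_pairsIn.1 hmem
    exact ((mem_cpt_iff g).1 hx).symm.trans ((mem_cpt_iff g).1 hy)
  · intro h
    refine Finset.mem_biUnion.2 ⟨cpt g T x, Finset.mem_image.2 ⟨x, Finset.mem_univ _, rfl⟩, ?_⟩
    exact mk_mem_pairsIn.2 ⟨hxy, mem_cpt_self g x, (mem_cpt_iff g).2 h⟩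

lemma IE_sub_pairs : IE g T ⊆ pairsIn Finset.univ := by
  intro e he
  obtain ⟨C, _, hmem⟩ := Finset.mem_biUnion.1 he
  exact pairsIn_mono (Finset.subset_univ C) hmem

/-- a tree path between endpoints of a negative-component connection has all edges negative. -/
lemma neg_walk_exists (hT : T.IsTree) {x y : Fin n} (h : Reach (NEG g T) x y) :
    ∃ (p : T.Walk x y), p.IsPath ∧ ∀ e ∈ p.edges, e ∈ NEG g T := by
  have hreach : (gr (NEG g T)).Reachable x y :=
    (reach_iff_reachable (NEG_nondiag g)).1 h
  obtain ⟨w⟩ := hreach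
  set q := w.toPath.1 with hq
  have hqp : q.IsPath := w.toPath.2
  have hqe : ∀ e ∈ q.edges, e ∈ NEG g T := by
    intro e he
    have := q.edges_subset_edgeSet he
    rw [gr_edgeSet (NEG_nondiag g)] at this
    exact_mod_cast this
  have hsub : ∀ e ∈ q.edges, e ∈ T.edgeSet := by
    intro e he
    have := Finset.mem_filter.1 (hqe e he)
    exact SimpleGraph.mem_edgeFinset.1 this.1
  refine ⟨q.transfer T hsub, hqp.transfer _, ?_⟩
  rw [SimpleGraph.Walk.edges_transfer]
  exact hqe

lemma claim1 (hT : T.IsTree) : IE g T ∩ T.edgeFinset = NEG g T := by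
  apply Finset.Subset.antisymm
  · intro e he
    obtain ⟨heIE, heT⟩ := Finset.mem_inter.1 he
    obtain ⟨x, y, rfl⟩ := sym2_exists_eq e
    have hadj : T.Adj x y := by simpa using heT
    have hxy : x ≠ y := hadj.ne
    have hreach : Reach (NEG g T) x y := (mem_IE_iff g hxy).1 heIE
    obtain ⟨p, hp, hpe⟩ := neg_walk_exists g hT hreach
    have huniq := hT.IsAcyclic.path_unique ⟨p, hp⟩ (SimpleGraph.Path.singleton hadj)
    have hmem : s(x, y) ∈ p.edges := by
      have : p = (SimpleGraph.Path.singleton hadj).1 := congrArg Subtype.val huniq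
      rw [this, SimpleGraph.Path.singleton]
      simp
    exact hpe _ hmem
  · intro e he
    obtain ⟨heT, hneg⟩ := Finset.mem_filter.1 he
    obtain ⟨x, y, rfl⟩ := sym2_exists_eq e
    have hadj : T.Adj x y := by simpa using heT
    refine Finset.mem_inter.2 ⟨(mem_IE_iff g hadj.ne).2 ?_, heT⟩
    exact Relation.ReflTransGen.single he

lemma subclaim1 (hT : T.IsTree) : ∀ e ∈ NT g T, e ∉ IE g T → 0 ≤ vv g e := by
  intro e heNT heIE
  obtain ⟨hepairs, heT, hprec⟩ : e ∈ pairsIn (Finset.univ : Finset (Fin n)) ∧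
      e ∉ T.edgeFinset ∧ ∀ f, OnPath T e f → prec g f e := by
    have := Finset.mem_filter.1 heNT
    exact ⟨this.1, this.2.1, this.2.2⟩
  obtain ⟨x, y, rfl⟩ := sym2_exists_eq e
  have hxy : x ≠ y := (mk_mem_pairsIn.1 hepairs).1
  have hnreach : ¬ Reach (NEG g T) x y := fun h => heIE ((mem_IE_iff g hxy).2 h)
  obtain ⟨w⟩ := hT.isConnected x y
  set p := w.toPath.1 with hp
  have hpp : p.IsPath := w.toPath.2
  have hex : ∃ f ∈ p.edges, 0 ≤ vv g f := by
    by_contra hall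
    push_neg at hall
    apply hnreach
    have hsub : ∀ e' ∈ p.edges, e' ∈ NEG g T := by
      intro e' he'
      exact Finset.mem_filter.2 ⟨SimpleGraph.mem_edgeFinset.2 (p.edges_subset_edgeSet he'),
        hall e' he'⟩
    have : (gr (NEG g T)).Reachable x y := by
      refine ⟨p.transfer (gr (NEG g T)) ?_⟩
      intro e' he'
      rw [gr_edgeSet (NEG_nondiag g)]
      exact_mod_cast hsub e' he'
    exact (reach_iff_reachable (NEG_nondiag g)).2 this
  obtain ⟨f, hfp, hfpos⟩ := hex
  have hOP : OnPath T s(x, y) f := by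
    refine ⟨SimpleGraph.mem_edgeFinset.2 (p.edges_subset_edgeSet hfp), ?_⟩
    intro x' y' hxy'
    rw [Sym2.eq_iff] at hxy'
    rcases hxy' with ⟨rfl, rfl⟩ | ⟨rfl, rfl⟩
    · exact path_edge_cut hT.IsAcyclic hpp hfp
    · intro hre
      exact path_edge_cut hT.IsAcyclic hpp hfp hre.symm
  exact le_trans hfpos (prec_vv_le g (hprec f hOP))

lemma subclaim2 (hT : T.IsTree) :
    ∀ e ∈ IE g T, e ∉ T.edgeFinset → e ∉ NT g T → vv g e ≤ 0 := by
  intro e heIE heT heNT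
  have hepairs : e ∈ pairsIn (Finset.univ : Finset (Fin n)) := IE_sub_pairs g heIE
  have hex : ∃ f, OnPath T e f ∧ ¬ prec g f e := by
    by_contra hall
    push_neg at hall
    exact heNT (Finset.mem_filter.2 ⟨hepairs, heT, hall⟩)
  obtain ⟨f, hOP, hnprec⟩ := hex
  have hfe : f ≠ e := by
    rintro rfl
    exact heT hOP.1
  have hprec : prec g e f := by
    rcases prec_total g (Ne.symm hfe) with h | h
    · exact h
    · exact absurd h hnprec
  obtain ⟨x, y, rfl⟩ := sym2_exists_eq e
  have hxy : x ≠ y := (mk_mem_pairsIn.1 hepairs).1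
  have hreach : Reach (NEG g T) x y := (mem_IE_iff g hxy).1 heIE
  obtain ⟨p, hp, hpe⟩ := neg_walk_exists g hT hreach
  have hfmem : f ∈ p.edges := onPath_mem_walk hOP rfl p
  have hfneg : vv g f < 0 := (Finset.mem_filter.1 (hpe f hfmem)).2
  exact le_trans (prec_vv_le g hprec) (le_of_lt hfneg)

lemma star_ineq (hg : g.PosSemidef) (hT : T.IsTree) :
    0 ≤ (∑ j, g j j) + ((∑ e ∈ NEG g T, vv g e) + ∑ e ∈ NT g T, vv g e) := by
  -- stability summed over components
  have hcover : (comps g T).biUnion id = Finset.univ := by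
    apply Finset.Subset.antisymm (Finset.subset_univ _)
    intro j _
    exact Finset.mem_biUnion.2 ⟨cpt g T j, Finset.mem_image.2 ⟨j, Finset.mem_univ _, rfl⟩,
      mem_cpt_self g j⟩
  have hstabsum : 0 ≤ ∑ C ∈ comps g T, ∑ i ∈ C, ∑ i' ∈ C, g i i' :=
    Finset.sum_nonneg fun C _ => stab g hg C
  have hVsplit : ∑ C ∈ comps g T, (∑ i ∈ C, ∑ i' ∈ C, g i i')
      = (∑ j, g j j) + ∑ e ∈ IE g T, vv g e := by
    rw [Finset.sum_congr rfl (fun C _ => V_split g C), Finset.sum_add_distrib]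
    congr 1
    · rw [← hcover, Finset.sum_biUnion (comps_disj g)]
      rfl
    · rw [IE, Finset.sum_biUnion]
      intro C hC C' hC' hne
      rw [Function.onFun]
      exact pairsIn_disjoint (comps_disj g hC hC' hne)
  have hIE : ∑ e ∈ IE g T, vv g e
      = (∑ e ∈ NEG g T, vv g e) + ∑ e ∈ IE g T \ T.edgeFinset, vv g e := by
    rw [sum_split (IE g T) T.edgeFinset, claim1 g hT]
  have hK : ∑ e ∈ IE g T \ T.edgeFinset, vv g e ≤ ∑ e ∈ NT g T, vv g e := by
    rw [sum_split (IE g T \ T.edgeFinset) (NT g T), sum_split (NT g T) (IE g T \ T.edgeFinset)]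
    have h1 : ∑ e ∈ (IE g T \ T.edgeFinset) \ NT g T, vv g e ≤ 0 := by
      apply Finset.sum_nonpos
      intro e he
      obtain ⟨heK, heNT⟩ := Finset.mem_sdiff.1 he
      obtain ⟨heIE, heT⟩ := Finset.mem_sdiff.1 heK
      exact subclaim2 g hT e heIE heT heNT
    have h2 : 0 ≤ ∑ e ∈ NT g T \ (IE g T \ T.edgeFinset), vv g e := by
      apply Finset.sum_nonneg
      intro e he
      obtain ⟨heNT, heK⟩ := Finset.mem_sdiff.1 he
      have heT : e ∉ T.edgeFinset := (Finset.mem_filter.1 heNT).2.1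
      have heIE : e ∉ IE g T := by
        intro h
        exact heK (Finset.mem_sdiff.2 ⟨h, heT⟩)
      exact subclaim1 g hT e heNT heIE
    have h3 : (IE g T \ T.edgeFinset) ∩ NT g T = NT g T ∩ (IE g T \ T.edgeFinset) :=
      Finset.inter_comm _ _
    rw [h3]
    linarith
  rw [hVsplit, hIE] at hstabsum
  linarith

end star

end BBF
namespace BBF

open Finset SimpleGraph
open scoped Classical

variable {n : ℕ} (g : Matrix (Fin n) (Fin n) ℝ)

lemma zeta_abs_le (e : Sym2 (Fin n)) :
    |zeta g e| ≤ |vv g e| * Real.exp (max 0 (-(vv g e))) := by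
  rcases le_or_gt 0 (vv g e) with h | h
  · have h1 : Real.exp (-(vv g e)) ≤ 1 := Real.exp_le_one_iff.2 (by linarith)
    have h2 := Real.add_one_le_exp (-(vv g e))
    rw [zeta, abs_of_nonpos (by linarith), max_eq_left (by linarith), Real.exp_zero, mul_one,
      abs_of_nonneg h]
    linarith
  · have h2 := Real.add_one_le_exp (vv g e)
    have h3 := Real.add_one_le_exp (-(vv g e))
    have hprod : Real.exp (vv g e) * Real.exp (-(vv g e)) = 1 := by
      rw [← Real.exp_add]
      simp
    have hpos := (Real.exp_pos (-(vv g e))).le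
    rw [zeta, abs_of_nonneg (by linarith), max_eq_right (by linarith : (0:ℝ) ≤ -(vv g e)),
      abs_of_neg h]
    nlinarith [mul_le_mul_of_nonneg_right h2 hpos]

lemma tree_term_bound (hg : g.PosSemidef) {T : SimpleGraph (Fin n)} (hT : T.IsTree) :
    (∏ j, Real.exp (-(g j j))) *
      |(∏ e ∈ T.edgeFinset, zeta g e) * ∏ e ∈ NT g T, (1 + zeta g e)|
      ≤ ∏ e ∈ T.edgeFinset, |vv g e| := by
  have hNT0 : ∀ e ∈ NT g T, (0:ℝ) ≤ 1 + zeta g e := by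
    intro e _
    rw [one_add_zeta]
    exact (Real.exp_pos _).le
  have habs : |(∏ e ∈ T.edgeFinset, zeta g e) * ∏ e ∈ NT g T, (1 + zeta g e)|
      = (∏ e ∈ T.edgeFinset, |zeta g e|) * ∏ e ∈ NT g T, (1 + zeta g e) := by
    rw [abs_mul, Finset.abs_prod, abs_of_nonneg (Finset.prod_nonneg hNT0)]
  have hPexp : (∏ j, Real.exp (-(g j j))) = Real.exp (-∑ j, g j j) := by
    rw [← Real.exp_sum]
    congr 1
    rw [← Finset.sum_neg_distrib]
  have hNTexp : (∏ e ∈ NT g T, (1 + zeta g e)) = Real.exp (-∑ e ∈ NT g T, vv g e) := by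
    rw [Finset.prod_congr rfl (fun e _ => one_add_zeta g e), ← Real.exp_sum]
    congr 1
    rw [← Finset.sum_neg_distrib]
  have hmax : ∑ e ∈ T.edgeFinset, max 0 (-(vv g e)) = -∑ e ∈ NEG g T, vv g e := by
    rw [NEG, Finset.sum_filter, ← Finset.sum_neg_distrib]
    refine Finset.sum_congr rfl fun e _ => ?_
    rcases lt_or_ge (vv g e) 0 with h | h
    · rw [if_pos h, max_eq_right (by linarith : (0:ℝ) ≤ -(vv g e))]
    · rw [if_neg (not_lt.2 h), max_eq_left (by linarith), neg_zero]
  have hZb : (∏ e ∈ T.edgeFinset, |zeta g e|)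
      ≤ (∏ e ∈ T.edgeFinset, |vv g e|) *
        Real.exp (∑ e ∈ T.edgeFinset, max 0 (-(vv g e))) := by
    rw [Real.exp_sum, ← Finset.prod_mul_distrib]
    exact Finset.prod_le_prod (fun e _ => abs_nonneg _) (fun e _ => zeta_abs_le g e)
  rw [habs, hPexp, hNTexp]
  have hvvnonneg : (0:ℝ) ≤ ∏ e ∈ T.edgeFinset, |vv g e| :=
    Finset.prod_nonneg fun e _ => abs_nonneg _
  calc Real.exp (-∑ j, g j j) *
        ((∏ e ∈ T.edgeFinset, |zeta g e|) * Real.exp (-∑ e ∈ NT g T, vv g e))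
      ≤ Real.exp (-∑ j, g j j) *
        (((∏ e ∈ T.edgeFinset, |vv g e|) *
          Real.exp (∑ e ∈ T.edgeFinset, max 0 (-(vv g e)))) *
          Real.exp (-∑ e ∈ NT g T, vv g e)) := by
        apply mul_le_mul_of_nonneg_left _ (Real.exp_pos _).le
        exact mul_le_mul_of_nonneg_right hZb (Real.exp_pos _).le
    _ = (∏ e ∈ T.edgeFinset, |vv g e|) *
          Real.exp ((-∑ j, g j j) + (∑ e ∈ T.edgeFinset, max 0 (-(vv g e)))
            + (-∑ e ∈ NT g T, vv g e)) := by
        rw [Real.exp_add, Real.exp_add]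
        ring
    _ ≤ (∏ e ∈ T.edgeFinset, |vv g e|) * 1 := by
        apply mul_le_mul_of_nonneg_left _ hvvnonneg
        rw [Real.exp_le_one_iff, hmax]
        have := star_ineq g hg hT
        linarith
    _ = ∏ e ∈ T.edgeFinset, |vv g e| := mul_one _

end BBF

open scoped Classical in
/-- **Battle–Brydges–Federbush tree-graph bound.** Let `g` be a real symmetric positive
semidefinite `n×n` matrix, `V Y = ∑_{j,j'∈Y} g j j'`, and let `φ` be the Ursell functions,
defined by `φ {j} = exp (-V {j})` and, for `|Y| ≥ 2`, by
`exp (-V Y) = ∑_{partitions π of Y} ∏_{B ∈ π} φ B`. Then `|φ {1,…,n}|` is bounded by the sum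
over all trees `T` on `{1,…,n}` of the product over the edges of `T` of `2 |g j j'|`. -/
theorem bbf_tree_bound (n : ℕ) (hn : 1 ≤ n) (g : Matrix (Fin n) (Fin n) ℝ)
    (hg : g.PosSemidef) (φ : Finset (Fin n) → ℝ)
    (hφ1 : ∀ j : Fin n, φ {j} = Real.exp (-(∑ i ∈ ({j} : Finset (Fin n)),
        ∑ i' ∈ ({j} : Finset (Fin n)), g i i')))
    (hφ2 : ∀ Y : Finset (Fin n), 2 ≤ Y.card →
        Real.exp (-(∑ i ∈ Y, ∑ i' ∈ Y, g i i')) =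
          ∑ P ∈ Finset.univ.filter (fun P : Finset (Finset (Fin n)) => IsPartitionOf P Y),
            ∏ B ∈ P, φ B) :
    |φ Finset.univ| ≤
      ∑ T ∈ Finset.univ.filter (fun T : SimpleGraph (Fin n) => T.IsTree),
        ∏ e ∈ T.edgeFinset,
          Sym2.lift ⟨fun j j' => 2 * |g j j'|,
            fun j j' => by
              simp only []
              rw [show g j j' = g j' j from by simpa using (hg.1.apply j j').symm]⟩ e := by
  have hne : Nonempty (Fin n) := Fin.pos_iff_nonempty.1 (by omega)
  have hphi := BBF.phi_eq_psi g φ hφ1 hφ2 Finset.univ Finset.univ_nonempty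
  rw [hphi, BBF.psi]
  have hexp_nonneg : (0:ℝ) ≤ ∏ j, Real.exp (-(g j j)) :=
    Finset.prod_nonneg fun j _ => (Real.exp_pos _).le
  rw [BBF.scheme g (by omega : 0 < n), abs_mul, abs_of_nonneg hexp_nonneg]
  refine le_trans (mul_le_mul_of_nonneg_left (Finset.abs_sum_le_sum_abs _ _) hexp_nonneg) ?_
  rw [Finset.mul_sum]
  refine Finset.sum_le_sum ?_
  intro T hT
  refine le_trans (BBF.tree_term_bound g hg (Finset.mem_filter.1 hT).2) (le_of_eq ?_)
  refine Finset.prod_congr rfl fun e he => ?_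
  induction e with
  | _ x y =>
    rw [Sym2.lift_mk]
    have hsym : g x y = g y x := by simpa using (hg.1.apply x y).symm
    rw [BBF.vv_mk, ← hsym, ← two_mul, abs_mul, abs_two]
end

section
/- There is a constant C_ξ > 0, depending only on ξ, such that the following holds. Let a > 0, K ∈ ℕ with K ≥ 1, L = K a, M > 0 with M a ≥ 1, and 0 ≤ ξ < 1. Let 𝒦 = {2πn/L : n ∈ ℤ^4} ∩ [-π/a, π/a)^4, and for k ∈ 𝒦 set σ_μ(k) = (e^{i k_μ a} - 1)/a and |σ(k)|^2 = Σ_{μ=0}^3 |σ_μ(k)|^2. Define, for x, y in the lattice Λ = aℤ^4 ∩ [0,L)^4 and μ,ν ∈ {0,1,2,3}, g^A_{μν}(x,y) = (1/L^4) Σ_{k∈𝒦} e^{i k·(x-y)} (|σ(k)|^2 + M^2)^{-1} (δ_{μν} + ξ · conj(σ_μ(k)) σ_ν(k) / ((1-ξ)|σ(k)|^2 + M^2)). Then |g^A_{μν}(x,y)| ≤ C_ξ a^{-2} for all x, y, μ, ν. -/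
open scoped Real

/-- The lattice symbol `σ_μ(k) = (e^{i k_μ a} - 1)/a`. -/
noncomputable def latticeSigma (a : ℝ) (k : Fin 4 → ℝ) (μ : Fin 4) : ℂ :=
  (Complex.exp (Complex.I * (k μ * a)) - 1) / a

/-- `|σ(k)|² = ∑_μ |σ_μ(k)|²`. -/
noncomputable def latticeSigmaSq (a : ℝ) (k : Fin 4 → ℝ) : ℝ :=
  ∑ μ : Fin 4, Complex.normSq (latticeSigma a k μ)

/-- The momentum-space covariance
`(|σ(k)|² + M²)⁻¹ (δ_{μν} + ξ conj(σ_μ(k)) σ_ν(k) / ((1-ξ)|σ(k)|² + M²))`. -/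
noncomputable def covEntry (a M ξ : ℝ) (k : Fin 4 → ℝ) (μ ν : Fin 4) : ℂ :=
  (((latticeSigmaSq a k + M ^ 2)⁻¹ : ℝ) : ℂ) *
    ((if μ = ν then 1 else 0) +
      (ξ : ℂ) * (starRingEnd ℂ (latticeSigma a k μ)) * latticeSigma a k ν /
        ((((1 - ξ) * latticeSigmaSq a k + M ^ 2 : ℝ)) : ℂ))

/-- The bosonic momenta: integers `m` with `2πm/L ∈ [-π/a, π/a)`, i.e. `-K ≤ 2m < K`. -/
noncomputable def bosonMom (K : ℕ) : Finset ℤ :=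
  (Finset.Ico (-(K : ℤ)) (K : ℤ)).filter (fun m => -(K : ℤ) ≤ 2 * m ∧ 2 * m < (K : ℤ))

/-- The position-space covariance of the non-compact massive lattice `U(1)` field,
`g^A_{μν}(x,y) = L⁻⁴ ∑_{k ∈ 𝒦} e^{i k⋅(x-y)} covEntry(k)_{μν}`, with `L = K a` and
`k = 2πm/L`, `m ∈ bosonMom K`. -/
noncomputable def gaugeCov (a : ℝ) (K : ℕ) (M ξ : ℝ) (μ ν : Fin 4) (x y : Fin 4 → ℝ) : ℂ :=
  (((K : ℝ) * a) ^ 4)⁻¹ *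
    ∑ m ∈ Fintype.piFinset (fun _ : Fin 4 => bosonMom K),
      Complex.exp (Complex.I *
          ((∑ ρ : Fin 4, (2 * π * (m ρ : ℝ) / ((K : ℝ) * a)) * (x ρ - y ρ) : ℝ) : ℂ)) *
        covEntry a M ξ (fun ρ => 2 * π * (m ρ : ℝ) / ((K : ℝ) * a)) μ ν


lemma abs_latticeSigma_le {a : ℝ} (ha : 0 < a) (k : Fin 4 → ℝ) (μ : Fin 4) :
    ‖latticeSigma a k μ‖ ≤ 2 / a := by
  unfold latticeSigma
  rw [norm_div]
  have h1 : ‖Complex.exp (Complex.I * (k μ * a))‖ = 1 := by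
    rw [Complex.norm_exp]
    simp [Complex.mul_re]
  have h2 : ‖Complex.exp (Complex.I * (k μ * a)) - 1‖ ≤ 2 := by
    calc ‖Complex.exp (Complex.I * (k μ * a)) - 1‖
        ≤ ‖Complex.exp (Complex.I * (k μ * a))‖ + ‖(1:ℂ)‖ := by
          exact norm_sub_le _ _
      _ ≤ 2 := by rw [h1]; norm_num
  have h3 : ‖(a : ℂ)‖ = a := by
    rw [Complex.norm_real, Real.norm_eq_abs, abs_of_pos ha]
  rw [h3]
  gcongr

lemma abs_covEntry_le {a M ξ : ℝ} (ha : 0 < a) (hM : 0 < M) (hMa : 1 ≤ M * a)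
    (hξ0 : 0 ≤ ξ) (hξ1 : ξ < 1) (k : Fin 4 → ℝ) (μ ν : Fin 4) :
    ‖covEntry a M ξ k μ ν‖ ≤ (1 + 4 * ξ) * a ^ 2 := by
  set S := latticeSigmaSq a k with hSdef
  have hS0 : 0 ≤ S := Finset.sum_nonneg fun _ _ => Complex.normSq_nonneg _
  have hM2 : 1 / a ^ 2 ≤ M ^ 2 := by
    rw [div_le_iff₀ (by positivity)]
    nlinarith
  have hD : 0 < (1 - ξ) * S + M ^ 2 := by nlinarith
  unfold covEntry
  rw [norm_mul]
  have hf1 : ‖(((S + M ^ 2)⁻¹ : ℝ) : ℂ)‖ ≤ a ^ 2 := by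
    rw [Complex.norm_real, Real.norm_eq_abs, abs_of_nonneg (by positivity)]
    rw [inv_le_comm₀ (by nlinarith) (by positivity)]
    calc (a ^ 2)⁻¹ = 1 / a ^ 2 := by rw [one_div]
      _ ≤ M ^ 2 := hM2
      _ ≤ S + M ^ 2 := by linarith
  have hf2 : ‖(if μ = ν then (1:ℂ) else 0) +
        (ξ : ℂ) * (starRingEnd ℂ (latticeSigma a k μ)) * latticeSigma a k ν /
          ((((1 - ξ) * S + M ^ 2 : ℝ)) : ℂ)‖ ≤ 1 + 4 * ξ := by
    refine le_trans (norm_add_le _ _) ?_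
    have hδ : ‖if μ = ν then (1:ℂ) else 0‖ ≤ 1 := by
      split <;> simp
    have hterm : ‖(ξ : ℂ) * (starRingEnd ℂ (latticeSigma a k μ)) * latticeSigma a k ν /
          ((((1 - ξ) * S + M ^ 2 : ℝ)) : ℂ)‖ ≤ 4 * ξ := by
      rw [norm_div, norm_mul, norm_mul, Complex.norm_conj, Complex.norm_real, Real.norm_eq_abs,
        Complex.norm_real, Real.norm_eq_abs, abs_of_nonneg hξ0, abs_of_pos hD]
      have hμ := abs_latticeSigma_le ha k μ
      have hν := abs_latticeSigma_le ha k ν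
      have hnum : ξ * ‖latticeSigma a k μ‖ * ‖latticeSigma a k ν‖
          ≤ ξ * (4 / a ^ 2) := by
        have h1 : ‖latticeSigma a k μ‖ * ‖latticeSigma a k ν‖
            ≤ (2 / a) * (2 / a) := by
          apply mul_le_mul hμ hν (norm_nonneg _) (by positivity)
        calc ξ * ‖latticeSigma a k μ‖ * ‖latticeSigma a k ν‖
            = ξ * (‖latticeSigma a k μ‖ * ‖latticeSigma a k ν‖) := by
              ring
          _ ≤ ξ * ((2 / a) * (2 / a)) := by
              exact mul_le_mul_of_nonneg_left h1 hξ0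
          _ = ξ * (4 / a ^ 2) := by field_simp; ring
      rw [div_le_iff₀ hD]
      have hDlb : 1 / a ^ 2 ≤ (1 - ξ) * S + M ^ 2 := by nlinarith
      calc ξ * ‖latticeSigma a k μ‖ * ‖latticeSigma a k ν‖
          ≤ ξ * (4 / a ^ 2) := hnum
        _ = 4 * ξ * (1 / a ^ 2) := by ring
        _ ≤ 4 * ξ * ((1 - ξ) * S + M ^ 2) :=
            mul_le_mul_of_nonneg_left hDlb (by positivity)
    linarith
  calc ‖(((S + M ^ 2)⁻¹ : ℝ) : ℂ)‖ * ‖_‖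
      ≤ a ^ 2 * (1 + 4 * ξ) := by
        exact mul_le_mul hf1 hf2 (norm_nonneg _) (by positivity)
    _ = (1 + 4 * ξ) * a ^ 2 := by ring

lemma bosonMom_card_le (K : ℕ) : (bosonMom K).card ≤ 2 * K := by
  unfold bosonMom
  calc ((Finset.Ico (-(K : ℤ)) (K : ℤ)).filter _).card
      ≤ (Finset.Ico (-(K : ℤ)) (K : ℤ)).card := Finset.card_filter_le _ _
    _ = 2 * K := by rw [Int.card_Ico]; omega

/-- Pointwise bound on the gauge covariance: `|g^A_{μν}(x,y)| ≤ C_ξ a⁻²`, with `C_ξ`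
depending only on the gauge-fixing parameter `ξ`, uniformly on the lattice
`Λ = aℤ⁴ ∩ [0,L)⁴` and in `L = Ka`, for `M a ≥ 1`. -/
theorem gaugeCov_pointwise_bound (ξ : ℝ) (hξ0 : 0 ≤ ξ) (hξ1 : ξ < 1) :
    ∃ C : ℝ, 0 < C ∧
      ∀ (a : ℝ), 0 < a → ∀ (K : ℕ), 1 ≤ K → ∀ (M : ℝ), 0 < M → 1 ≤ M * a →
      ∀ (mx my : Fin 4 → Fin K) (μ ν : Fin 4),
        ‖gaugeCov a K M ξ μ ν (fun ρ => a * (mx ρ : ℝ)) (fun ρ => a * (my ρ : ℝ))‖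
          ≤ C / a ^ 2 := by
  refine ⟨16 * (1 + 4 * ξ), by nlinarith, ?_⟩
  intro a ha K hK M hM hMa mx my μ ν
  unfold gaugeCov
  rw [norm_mul]
  have hKa : (0:ℝ) < (K : ℝ) * a := by
    have : (1:ℝ) ≤ (K : ℝ) := by exact_mod_cast hK
    nlinarith
  have hinv : ‖(((((K : ℝ) * a) ^ 4)⁻¹ : ℝ) : ℂ)‖ = (((K : ℝ) * a) ^ 4)⁻¹ := by
    rw [Complex.norm_real, Real.norm_eq_abs, abs_of_pos (by positivity)]
  rw [hinv]
  have hsum : ‖∑ m ∈ Fintype.piFinset (fun _ : Fin 4 => bosonMom K),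
      Complex.exp (Complex.I *
          ((∑ ρ : Fin 4, (2 * π * (m ρ : ℝ) / ((K : ℝ) * a)) *
            ((fun ρ => a * (mx ρ : ℝ)) ρ - (fun ρ => a * (my ρ : ℝ)) ρ) : ℝ) : ℂ)) *
        covEntry a M ξ (fun ρ => 2 * π * (m ρ : ℝ) / ((K : ℝ) * a)) μ ν‖
      ≤ ((2 * K : ℝ)) ^ 4 * ((1 + 4 * ξ) * a ^ 2) := by
    calc ‖_‖ ≤ ∑ m ∈ Fintype.piFinset (fun _ : Fin 4 => bosonMom K),
          ‖Complex.exp (Complex.I *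
            ((∑ ρ : Fin 4, (2 * π * (m ρ : ℝ) / ((K : ℝ) * a)) *
              ((fun ρ => a * (mx ρ : ℝ)) ρ - (fun ρ => a * (my ρ : ℝ)) ρ) : ℝ) : ℂ)) *
          covEntry a M ξ (fun ρ => 2 * π * (m ρ : ℝ) / ((K : ℝ) * a)) μ ν‖ :=
        norm_sum_le _ _
      _ ≤ ∑ _m ∈ Fintype.piFinset (fun _ : Fin 4 => bosonMom K), (1 + 4 * ξ) * a ^ 2 := by
          apply Finset.sum_le_sum
          intro m _
          rw [norm_mul]
          have hexp : ‖Complex.exp (Complex.I *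
              ((∑ ρ : Fin 4, (2 * π * (m ρ : ℝ) / ((K : ℝ) * a)) *
                ((fun ρ => a * (mx ρ : ℝ)) ρ - (fun ρ => a * (my ρ : ℝ)) ρ) : ℝ) : ℂ))‖ = 1 := by
            rw [mul_comm, Complex.norm_exp_ofReal_mul_I]
          rw [hexp, one_mul]
          exact abs_covEntry_le ha hM hMa hξ0 hξ1 _ μ ν
      _ ≤ ((2 * K : ℝ)) ^ 4 * ((1 + 4 * ξ) * a ^ 2) := by
          rw [Finset.sum_const, nsmul_eq_mul]
          apply mul_le_mul_of_nonneg_right _ (by positivity)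
          have hcard : (Fintype.piFinset (fun _ : Fin 4 => bosonMom K)).card ≤ (2 * K) ^ 4 := by
            rw [Fintype.card_piFinset]
            calc ∏ _i : Fin 4, (bosonMom K).card ≤ ∏ _i : Fin 4, 2 * K :=
                Finset.prod_le_prod (fun _ _ => Nat.zero_le _)
                  (fun _ _ => bosonMom_card_le K)
              _ = (2 * K) ^ 4 := by simp [Finset.prod_const]
          calc ((Fintype.piFinset (fun _ : Fin 4 => bosonMom K)).card : ℝ)
              ≤ (((2 * K) ^ 4 : ℕ) : ℝ) := by exact_mod_cast hcard
            _ = ((2 * K : ℝ)) ^ 4 := by push_cast; ring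
  calc (((K : ℝ) * a) ^ 4)⁻¹ * ‖_‖
      ≤ (((K : ℝ) * a) ^ 4)⁻¹ * (((2 * K : ℝ)) ^ 4 * ((1 + 4 * ξ) * a ^ 2)) := by
        exact mul_le_mul_of_nonneg_left hsum (by positivity)
    _ = 16 * (1 + 4 * ξ) / a ^ 2 := by
        have hK0 : (0:ℝ) < (K : ℝ) := by positivity
        field_simp
        ring
end
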